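/- arXiv:2204.06206 — 6 statements merged into one kernel-verified Lean document; each statement's English description precedes it below -/
import Mathlib

section
/- Let Y be an m×n real matrix with m ≤ n and let 0 < η < ‖Y‖_F². Let w₁, …, w_m be weights with 0 < w₁ ≤ w₂ ≤ … ≤ w_m, and let f(X) = Σᵢ wᵢ·σ_{X,i} be the weighted nuclear norm (the standard nuclear norm is the case all wᵢ = 1). If X† is a global minimizer of f(X) over the constraint set {X : ‖Y − X‖_F² ≤ η}, then ‖Y − X†‖_F² = η, i.e., every global minimizer lies on the boundary of the constraint. -/
/-- The singular values of an `m×n` real matrix `X` (`m ≤ n`), in non-increasing order: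
`singularValues hmn X i` is the square root of the `(i+1)`-st largest eigenvalue of the
positive semidefinite matrix `XᵀX` (over `ℝ`, `Xᴴ = Xᵀ`). -/
noncomputable def singularValues {m n : ℕ} (hmn : m ≤ n) (X : Matrix (Fin m) (Fin n) ℝ) :
    Fin m → ℝ := fun i =>
  let ev : Fin n → ℝ := (Matrix.isHermitian_conjTranspose_mul_self X).eigenvalues
  Real.sqrt ((ev ∘ Tuple.sort ev) (Fin.rev (Fin.castLE hmn i)))

/-- Squared Frobenius norm of a real matrix: sum of squares of the entries. -/
def frobSq {m n : ℕ} (A : Matrix (Fin m) (Fin n) ℝ) : ℝ := ∑ i, ∑ j, (A i j) ^ 2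

open Matrix Polynomial in
lemma charpoly_unitary_conj {N : ℕ} (U : Matrix.unitaryGroup (Fin N) ℝ)
    (B : Matrix (Fin N) (Fin N) ℝ) :
    Matrix.charpoly ((U : Matrix (Fin N) (Fin N) ℝ) * B * star (U : Matrix (Fin N) (Fin N) ℝ))
      = B.charpoly := by
  set V : Matrix (Fin N) (Fin N) ℝ := (U : Matrix (Fin N) (Fin N) ℝ) with hV
  have hU : V * star V = 1 := Matrix.mem_unitaryGroup_iff.mp U.2
  have hU' : star V * V = 1 := Matrix.mem_unitaryGroup_iff'.mp U.2
  have hmap1 : C.mapMatrix V * C.mapMatrix (star V) = 1 := by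
    rw [← _root_.map_mul, hU, _root_.map_one]
  have hmap2 : C.mapMatrix (star V) * C.mapMatrix V = 1 := by
    rw [← _root_.map_mul, hU', _root_.map_one]
  have key : charmatrix (V * B * star V)
      = C.mapMatrix V * charmatrix B * C.mapMatrix (star V) := by
    rw [charmatrix, charmatrix, _root_.map_mul, _root_.map_mul, mul_sub, sub_mul]
    congr 1
    have hc : scalar (Fin N) (X : ℝ[X]) * C.mapMatrix (star V)
        = C.mapMatrix (star V) * scalar (Fin N) (X : ℝ[X]) :=
      Matrix.scalar_commute (X : ℝ[X]) (fun r' => Commute.all _ _) _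
    rw [mul_assoc, hc, ← mul_assoc, hmap1, one_mul]
  rw [Matrix.charpoly, key, Matrix.det_mul, Matrix.det_mul, mul_comm, ← mul_assoc,
    ← Matrix.det_mul, hmap2, Matrix.det_one, one_mul, Matrix.charpoly]

open Matrix Polynomial in
lemma diag_charpoly {N : ℕ} (f : Fin N → ℝ) :
    (Matrix.diagonal f).charpoly = ∏ i, (X - C (f i)) := by
  simpa using Matrix.charpoly_of_upperTriangular _ (Matrix.blockTriangular_diagonal f)

open Matrix Polynomial in
lemma diag_charpoly_roots {N : ℕ} (f : Fin N → ℝ) :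
    (Matrix.diagonal f).charpoly.roots = ↑(List.ofFn f) := by
  rw [diag_charpoly]
  have : (∏ i, (X - C (f i))) = (Multiset.map (fun a => X - C a) ↑(List.ofFn f)).prod := by
    rw [Multiset.map_coe, List.map_ofFn, Multiset.prod_coe, List.prod_ofFn]
    rfl
  rw [this, Polynomial.roots_multiset_prod_X_sub_C]

lemma sorted_unique {N : ℕ} {f g : Fin N → ℝ} (hg : Monotone g)
    (h : List.Perm (List.ofFn f) (List.ofFn g)) : f ∘ Tuple.sort f = g := by
  apply List.ofFn_injective
  exact List.Perm.eq_of_sortedLE (List.sortedLE_ofFn_iff.mpr (Tuple.monotone_sort f))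
    (List.sortedLE_ofFn_iff.mpr hg) (((Tuple.sort f).ofFn_comp_perm f).trans h)

lemma eigenvalues_perm {N : ℕ} {A : Matrix (Fin N) (Fin N) ℝ} (hA : A.IsHermitian)
    (U : Matrix.unitaryGroup (Fin N) ℝ) (d : Fin N → ℝ)
    (h : A = (U : Matrix (Fin N) (Fin N) ℝ) * Matrix.diagonal d
        * star (U : Matrix (Fin N) (Fin N) ℝ)) :
    List.Perm (List.ofFn hA.eigenvalues) (List.ofFn d) := by
  have h1 : A.charpoly = (Matrix.diagonal d).charpoly := by
    rw [h]; exact charpoly_unitary_conj U _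
  have h2 : A.charpoly = (Matrix.diagonal hA.eigenvalues).charpoly := by
    have hs := hA.spectral_theorem
    have hid : (RCLike.ofReal ∘ hA.eigenvalues : Fin N → ℝ) = hA.eigenvalues := by
      ext i; simp
    conv_lhs => rw [hs]
    rw [hid]
    exact charpoly_unitary_conj _ _
  have h3 : (↑(List.ofFn hA.eigenvalues) : Multiset ℝ) = ↑(List.ofFn d) := by
    rw [← diag_charpoly_roots hA.eigenvalues, ← diag_charpoly_roots d, ← h1, ← h2]
  exact Multiset.coe_eq_coe.mp h3

lemma eigenvalues_sorted_smul {N : ℕ} {A : Matrix (Fin N) (Fin N) ℝ} (hA : A.IsHermitian)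
    {c : ℝ} (hc : 0 ≤ c) (hcA : (c • A).IsHermitian) :
    hcA.eigenvalues ∘ Tuple.sort hcA.eigenvalues
      = fun j => c * ((hA.eigenvalues ∘ Tuple.sort hA.eigenvalues) j) := by
  have hs := hA.spectral_theorem
  have hid : (RCLike.ofReal ∘ hA.eigenvalues : Fin N → ℝ) = hA.eigenvalues := by ext i; simp
  rw [hid] at hs
  have hscale : c • A = (hA.eigenvectorUnitary : Matrix (Fin N) (Fin N) ℝ)
      * Matrix.diagonal (c • hA.eigenvalues)
      * star (hA.eigenvectorUnitary : Matrix (Fin N) (Fin N) ℝ) := by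
    rw [Matrix.diagonal_smul, Matrix.mul_smul, Matrix.smul_mul]; exact congrArg (c • ·) hs
  have hperm := eigenvalues_perm hcA _ _ hscale
  apply sorted_unique
  · intro a b hab
    exact mul_le_mul_of_nonneg_left (Tuple.monotone_sort hA.eigenvalues hab) hc
  · refine hperm.trans ?_
    have h1 : List.ofFn (c • hA.eigenvalues) = List.map (c * ·) (List.ofFn hA.eigenvalues) := by
      rw [List.map_ofFn]; rfl
    have h2 : (List.ofFn fun j => c * ((hA.eigenvalues ∘ Tuple.sort hA.eigenvalues) j))
        = List.map (c * ·) (List.ofFn (hA.eigenvalues ∘ Tuple.sort hA.eigenvalues)) := by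
      rw [List.map_ofFn]; rfl
    rw [h1, h2]
    exact (((Tuple.sort hA.eigenvalues).ofFn_comp_perm hA.eigenvalues).map _).symm

open Matrix in
lemma eig_congr {N : ℕ} {A B : Matrix (Fin N) (Fin N) ℝ} (h : A = B) (hA : A.IsHermitian)
    (hB : B.IsHermitian) : hA.eigenvalues = hB.eigenvalues := by subst h; rfl

open Matrix in
lemma singularValues_smul {m n : ℕ} (hmn : m ≤ n) (X : Matrix (Fin m) (Fin n) ℝ)
    {c : ℝ} (hc : 0 ≤ c) :
    singularValues hmn (c • X) = fun i => c * singularValues hmn X i := by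
  funext i
  have hmat : (c • X)ᴴ * (c • X) = (c ^ 2) • (Xᴴ * X) := by
    rw [Matrix.conjTranspose_smul, star_trivial, Matrix.smul_mul, Matrix.mul_smul, smul_smul, sq]
  have hB : ((c ^ 2) • (Xᴴ * X)).IsHermitian :=
    hmat ▸ Matrix.isHermitian_conjTranspose_mul_self (c • X)
  simp only [singularValues]
  rw [eig_congr hmat (Matrix.isHermitian_conjTranspose_mul_self (c • X)) hB]
  rw [eigenvalues_sorted_smul (Matrix.isHermitian_conjTranspose_mul_self X) (sq_nonneg c) hB]
  rw [Real.sqrt_mul (sq_nonneg c), Real.sqrt_sq hc]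

open Matrix in
lemma singularValues_top_pos {m n : ℕ} (hmn : m ≤ n) {X : Matrix (Fin m) (Fin n) ℝ}
    (hX : X ≠ 0) (hm : 0 < m) : 0 < singularValues hmn X ⟨0, hm⟩ := by
  set hA := Matrix.isHermitian_conjTranspose_mul_self X with hhA
  set ev := hA.eigenvalues with hev
  have hpsd : (Xᴴ * X).PosSemidef := Matrix.posSemidef_conjTranspose_mul_self X
  have hnonneg : ∀ l, 0 ≤ ev l := hpsd.eigenvalues_nonneg
  set k := Fin.rev (Fin.castLE hmn (⟨0, hm⟩ : Fin m)) with hk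
  have hmax : ∀ j : Fin n, (ev ∘ Tuple.sort ev) j ≤ (ev ∘ Tuple.sort ev) k := by
    intro j
    apply Tuple.monotone_sort
    rw [Fin.le_def]
    have := j.isLt
    simp only [hk, Fin.val_rev, Fin.coe_castLE]
    omega
  have hpos : 0 < (ev ∘ Tuple.sort ev) k := by
    rcases lt_or_ge 0 ((ev ∘ Tuple.sort ev) k) with h | h
    · exact h
    · exfalso
      have hev0 : ev = 0 := by
        funext l
        have h1 : ev l ≤ 0 := by
          have := hmax ((Tuple.sort ev).symm l)
          simpa using le_trans (by simpa using this) h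
        exact le_antisymm h1 (hnonneg l)
      have hA0 : Xᴴ * X = 0 := by
        have hs := hA.spectral_theorem
        rwa [← hev, hev0, Pi.comp_zero, RCLike.ofReal_zero,
          (by rfl : Function.const (Fin n) (0 : ℝ) = fun _ => 0),
          Matrix.diagonal_zero, map_zero] at hs
      apply hX
      ext a b
      have hdiag : (Xᴴ * X) b b = 0 := by rw [hA0]; rfl
      have hsum : ∑ i, X i b ^ 2 = 0 := by
        rw [← hdiag, Matrix.mul_apply]
        simp [Matrix.conjTranspose_apply, sq]
      have := (Finset.sum_eq_zero_iff_of_nonneg (fun i _ => sq_nonneg (X i b))).mp hsum a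
        (Finset.mem_univ a)
      simpa using pow_eq_zero_iff (n := 2) (by norm_num) |>.mp this
  exact Real.sqrt_pos.mpr hpos

lemma frobSq_add_smul {m n : ℕ} (A B : Matrix (Fin m) (Fin n) ℝ) (δ : ℝ) :
    frobSq (A + δ • B) = frobSq A + 2 * δ * (∑ i, ∑ j, A i j * B i j) + δ ^ 2 * frobSq B := by
  simp only [frobSq, Matrix.add_apply, Matrix.smul_apply, smul_eq_mul, Finset.mul_sum,
    ← Finset.sum_add_distrib]
  apply Finset.sum_congr rfl
  intro i _
  apply Finset.sum_congr rfl
  intro j _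
  ring

lemma frobSq_nonneg {m n : ℕ} (A : Matrix (Fin m) (Fin n) ℝ) : 0 ≤ frobSq A :=
  Finset.sum_nonneg fun i _ => Finset.sum_nonneg fun j _ => sq_nonneg _

/-- For `0 < η < ‖Y‖_F²` and positive non-decreasing weights, every global minimizer of
the weighted nuclear norm `f(X) = Σᵢ wᵢ σ_{X,i}` over `{X : ‖Y − X‖_F² ≤ η}` lies on the
boundary: `‖Y − X†‖_F² = η`. -/
theorem constrained_minimizer_on_boundary {m n : ℕ} (hmn : m ≤ n)
    (Y : Matrix (Fin m) (Fin n) ℝ) (η : ℝ) (hη0 : 0 < η) (hηY : η < frobSq Y)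
    (w : Fin m → ℝ) (hwpos : ∀ i, 0 < w i) (hwmono : Monotone w)
    (Xdag : Matrix (Fin m) (Fin n) ℝ) (hfeas : frobSq (Y - Xdag) ≤ η)
    (hmin : ∀ X : Matrix (Fin m) (Fin n) ℝ, frobSq (Y - X) ≤ η →
      (∑ i, w i * singularValues hmn Xdag i) ≤ ∑ i, w i * singularValues hmn X i) :
    frobSq (Y - Xdag) = η := by
  by_contra hne
  have hlt : frobSq (Y - Xdag) < η := lt_of_le_of_ne hfeas hne
  have hm : 0 < m := by
    rcases Nat.eq_zero_or_pos m with h | h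
    · exfalso
      subst h
      simp only [frobSq, Finset.univ_eq_empty, Finset.sum_empty] at hηY
      linarith
    · exact h
  have hXne : Xdag ≠ 0 := by
    intro h
    rw [h, sub_zero] at hfeas
    linarith
  have hσnonneg : ∀ i, 0 ≤ singularValues hmn Xdag i := fun i => Real.sqrt_nonneg _
  set f0 := ∑ i, w i * singularValues hmn Xdag i with hf0
  have hf0pos : 0 < f0 := by
    apply Finset.sum_pos' (fun i _ => mul_nonneg (hwpos i).le (hσnonneg i))
    exact ⟨⟨0, hm⟩, Finset.mem_univ _,
      mul_pos (hwpos _) (singularValues_top_pos hmn hXne hm)⟩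
  set g1 := frobSq (Y - Xdag) with hg1
  set ip := ∑ i, ∑ j, (Y - Xdag) i j * Xdag i j with hip
  have hfrobnn : 0 ≤ frobSq Xdag := frobSq_nonneg Xdag
  set K := 2 * |ip| + frobSq Xdag + 1 with hK
  have hKpos : 0 < K := by positivity
  set δ := min 1 ((η - g1) / K) with hδ
  have hδpos : 0 < δ := lt_min one_pos (div_pos (by linarith) hKpos)
  have hδ1 : δ ≤ 1 := min_le_left _ _
  have hδK : δ * K ≤ η - g1 := by
    have h1 : δ ≤ (η - g1) / K := min_le_right _ _
    calc δ * K ≤ ((η - g1) / K) * K := mul_le_mul_of_nonneg_right h1 hKpos.le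
      _ = η - g1 := div_mul_cancel₀ _ hKpos.ne'
  set t := 1 - δ with ht
  have ht0 : 0 ≤ t := by simp only [ht]; linarith
  have hfeas' : frobSq (Y - t • Xdag) ≤ η := by
    have hdecomp : Y - t • Xdag = (Y - Xdag) + δ • Xdag := by
      rw [ht]
      ext i j
      simp [Matrix.sub_apply, Matrix.add_apply, Matrix.smul_apply, sub_smul]
      ring
    rw [hdecomp, frobSq_add_smul]
    have habs : ip ≤ |ip| := le_abs_self ip
    have h2 : δ ^ 2 * frobSq Xdag ≤ δ * frobSq Xdag := by
      nlinarith [mul_nonneg (mul_nonneg hδpos.le (sub_nonneg.mpr hδ1)) hfrobnn]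
    nlinarith
  have hcomp := hmin (t • Xdag) hfeas'
  rw [singularValues_smul hmn Xdag ht0] at hcomp
  have hsum : (∑ i, w i * (t * singularValues hmn Xdag i)) = t * f0 := by
    rw [hf0, Finset.mul_sum]
    apply Finset.sum_congr rfl
    intro i _
    ring
  rw [hsum] at hcomp
  nlinarith
end

section
/- Let σ₁ ≥ σ₂ ≥ … ≥ σ_m ≥ 0 be a non-increasing sequence of nonnegative reals and define φ(λ) = Σᵢ₌₁^m min(σᵢ², λ²) for λ ≥ 0. Let η satisfy 0 < η < Σᵢ₌₁^m σᵢ². Define b_j = j·σ_j² + Σ_{i=j+1}^m σᵢ² for j = 1, …, m and b_{m+1} = 0, and let k be an index with b_{k+1} < η ≤ b_k. Then λ* = √((η − Σ_{i=k+1}^m σᵢ²)/k) is positive and is the unique positive solution of the equation φ(λ) = η. -/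
/-- Closed-form solution of the discrepancy equation `φ(λ) = η` for the nuclear norm.
Here `σ j` is the `(j+1)`-st singular value (`j = 0, …, m−1`), non-increasing and
nonnegative, `φ(λ) = Σᵢ min(σᵢ², λ²)`, `0 < η < Σᵢ σᵢ²`, and `k` (with `1 ≤ k ≤ m`) is an
index with `b_{k+1} < η ≤ b_k`, where `b_j = j·σ_j² + Σ_{i=j+1}^m σᵢ²` and `b_{m+1} = 0`.
Then `λ* = √((η − Σ_{i=k+1}^m σᵢ²)/k)` is positive and the unique positive root of
`φ(λ) = η`. -/

theorem discrepancy_root_closed_form (m k : ℕ) (σ : ℕ → ℝ)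
    (hord : ∀ i, i + 1 < m → σ (i + 1) ≤ σ i) (hnn : ∀ i, i < m → 0 ≤ σ i)
    (η : ℝ) (hη0 : 0 < η) (hηY : η < ∑ i ∈ Finset.range m, (σ i) ^ 2)
    (hk1 : 1 ≤ k) (hkm : k ≤ m)
    (hbk : η ≤ (k : ℝ) * (σ (k - 1)) ^ 2 + ∑ i ∈ Finset.Ico k m, (σ i) ^ 2)
    (hbk1 : (if k < m then ((k : ℝ) + 1) * (σ k) ^ 2 + ∑ i ∈ Finset.Ico (k + 1) m, (σ i) ^ 2
      else 0) < η) :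
    0 < Real.sqrt ((η - ∑ i ∈ Finset.Ico k m, (σ i) ^ 2) / k) ∧
    (∑ i ∈ Finset.range m,
        min ((σ i) ^ 2) (Real.sqrt ((η - ∑ i ∈ Finset.Ico k m, (σ i) ^ 2) / k) ^ 2)) = η ∧
    ∀ lam : ℝ, 0 < lam → (∑ i ∈ Finset.range m, min ((σ i) ^ 2) (lam ^ 2)) = η →
      lam = Real.sqrt ((η - ∑ i ∈ Finset.Ico k m, (σ i) ^ 2) / k) := by
  set T : ℝ := ∑ i ∈ Finset.Ico k m, (σ i) ^ 2 with hT
  set L2 : ℝ := (η - T) / k with hL2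
  have hkpos : (0:ℝ) < (k:ℝ) := by exact_mod_cast hk1
  -- monotonicity
  have mono : ∀ i j : ℕ, i ≤ j → j < m → σ j ≤ σ i := by
    intro i j hij hjm
    induction j with
    | zero => interval_cases i; rfl
    | succ n ih =>
      rcases Nat.eq_or_lt_of_le hij with h | h
      · rw [h]
      · exact le_trans (hord n hjm) (ih (Nat.lt_succ_iff.mp h) (Nat.lt_of_succ_lt hjm))
  have mono2 : ∀ i j : ℕ, i ≤ j → j < m → (σ j)^2 ≤ (σ i)^2 := fun i j hij hjm =>
    pow_le_pow_left₀ (hnn j hjm) (mono i j hij hjm) 2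
  -- η - T > 0
  have hηT : T < η := by
    rcases lt_or_ge k m with hkm' | hkm'
    · rw [if_pos hkm'] at hbk1
      have hTsplit : T = (σ k)^2 + ∑ i ∈ Finset.Ico (k+1) m, (σ i)^2 :=
        Finset.sum_eq_sum_Ico_succ_bot hkm' _
      have hσk : (0:ℝ) ≤ (σ k)^2 := sq_nonneg _
      nlinarith
    · have : k = m := le_antisymm hkm hkm'
      simp [hT, this, hη0]
  have hL2pos : 0 < L2 := div_pos (by linarith) hkpos
  -- σ i ^2 ≥ L2 for i < k
  have hupper : ∀ i, i < k → L2 ≤ (σ i)^2 := by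
    intro i hi
    have hk1m : k - 1 < m := lt_of_lt_of_le (Nat.sub_lt (by omega) one_pos) hkm
    have h1 : L2 ≤ (σ (k-1))^2 := by
      rw [hL2, div_le_iff₀ hkpos]
      nlinarith
    exact le_trans h1 (mono2 i (k-1) (by omega) hk1m)
  -- σ i ^2 ≤ L2 for k ≤ i < m
  have hlower : ∀ i, k ≤ i → i < m → (σ i)^2 ≤ L2 := by
    intro i hki him
    have hkm' : k < m := lt_of_le_of_lt hki him
    rw [if_pos hkm'] at hbk1
    have hTsplit : T = (σ k)^2 + ∑ i ∈ Finset.Ico (k+1) m, (σ i)^2 :=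
      Finset.sum_eq_sum_Ico_succ_bot hkm' _
    have h1 : (σ k)^2 ≤ L2 := by
      rw [hL2, le_div_iff₀ hkpos]
      nlinarith
    exact le_trans (mono2 k i hki him) h1
  have hsqrt2 : (Real.sqrt L2)^2 = L2 := Real.sq_sqrt hL2pos.le
  -- the key sum computation
  have hφL2 : (∑ i ∈ Finset.range m, min ((σ i)^2) L2) = η := by
    rw [Finset.range_eq_Ico, ← Finset.sum_Ico_consecutive _ (Nat.zero_le k) hkm]
    have h1 : ∑ i ∈ Finset.Ico 0 k, min ((σ i)^2) L2 = (k:ℝ) * L2 := by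
      rw [Finset.sum_congr rfl (fun i hi => min_eq_right (hupper i (Finset.mem_Ico.mp hi).2))]
      simp [mul_comm]
    have h2 : ∑ i ∈ Finset.Ico k m, min ((σ i)^2) L2 = T := by
      exact Finset.sum_congr rfl (fun i hi =>
        min_eq_left (hlower i (Finset.mem_Ico.mp hi).1 (Finset.mem_Ico.mp hi).2))
    rw [h1, h2, hL2]
    field_simp
    ring
  have hσ0 : L2 < (σ 0)^2 := by
    by_contra h
    push_neg at h
    have : ∀ i ∈ Finset.range m, min ((σ i)^2) L2 = (σ i)^2 := by
      intro i hi
      exact min_eq_left (le_trans (mono2 0 i (Nat.zero_le i) (Finset.mem_range.mp hi)) h)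
    rw [Finset.sum_congr rfl this] at hφL2
    linarith
  have hm0 : 0 < m := lt_of_lt_of_le hk1 hkm
  refine ⟨Real.sqrt_pos.mpr hL2pos, by rw [hsqrt2]; exact hφL2, ?_⟩
  intro lam hlam hφlam
  have key : lam^2 = L2 := by
    rcases lt_trichotomy (lam^2) L2 with h | h | h
    · exfalso
      have hlt : (∑ i ∈ Finset.range m, min ((σ i)^2) (lam^2)) <
          (∑ i ∈ Finset.range m, min ((σ i)^2) L2) := by
        apply Finset.sum_lt_sum
        · exact fun i _ => min_le_min le_rfl h.le
        · exact ⟨0, Finset.mem_range.mpr hm0,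
            lt_of_le_of_lt (min_le_right _ _) (by rw [min_eq_right (hupper 0 hk1)] at *; exact h)⟩
      rw [hφlam, hφL2] at hlt; linarith
    · exact h
    · exfalso
      have hlt : (∑ i ∈ Finset.range m, min ((σ i)^2) L2) <
          (∑ i ∈ Finset.range m, min ((σ i)^2) (lam^2)) := by
        apply Finset.sum_lt_sum
        · exact fun i _ => min_le_min le_rfl h.le
        · exact ⟨0, Finset.mem_range.mpr hm0, by
            rw [min_eq_right (hupper 0 hk1)]
            exact lt_min hσ0 h⟩
      rw [hφlam, hφL2] at hlt; linarith
  rw [← key, Real.sqrt_sq hlam.le]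
end

section
/- Let σ₁ ≥ σ₂ ≥ … ≥ σ_m ≥ 0 be a non-increasing sequence of nonnegative reals and let 0 < w₁ ≤ w₂ ≤ … ≤ w_m be positive non-decreasing weights. Define ψ(λ) = Σᵢ₌₁^m min(σᵢ², λ²·wᵢ²) for λ ≥ 0. Let η satisfy 0 < η < Σᵢ₌₁^m σᵢ². Define b_j = (σ_j/w_j)²·Σ_{i=1}^j wᵢ² + Σ_{i=j+1}^m σᵢ² for j = 1, …, m and b_{m+1} = 0, and let k be an index with b_{k+1} < η ≤ b_k. Then λ* = √((η − Σ_{i=k+1}^m σᵢ²)/(Σ_{i=1}^k wᵢ²)) is positive and is the unique positive solution of the equation ψ(λ) = η. -/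
/-- Closed-form solution of the weighted discrepancy equation `ψ(λ) = η`.  Here `σ j`,
`w j` are the `(j+1)`-st singular value and weight (`j = 0, …, m−1`), with `σ`
non-increasing nonnegative and `w` positive non-decreasing,
`ψ(λ) = Σᵢ min(σᵢ², λ²wᵢ²)`, `0 < η < Σᵢ σᵢ²`, and `k` (with `1 ≤ k ≤ m`) is an index with
`b_{k+1} < η ≤ b_k`, where `b_j = (σ_j/w_j)²·Σ_{i=1}^j wᵢ² + Σ_{i=j+1}^m σᵢ²` and
`b_{m+1} = 0`.  Then `λ* = √((η − Σ_{i=k+1}^m σᵢ²)/(Σ_{i=1}^k wᵢ²))` is positive and is the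
unique positive root of `ψ(λ) = η`. -/
theorem weighted_discrepancy_root_closed_form (m k : ℕ) (σ w : ℕ → ℝ)
    (hord : ∀ i, i + 1 < m → σ (i + 1) ≤ σ i) (hnn : ∀ i, i < m → 0 ≤ σ i)
    (hwpos : ∀ i, i < m → 0 < w i) (hwmono : ∀ i, i + 1 < m → w i ≤ w (i + 1))
    (η : ℝ) (hη0 : 0 < η) (hηY : η < ∑ i ∈ Finset.range m, (σ i) ^ 2)
    (hk1 : 1 ≤ k) (hkm : k ≤ m)
    (hbk : η ≤ (σ (k - 1) / w (k - 1)) ^ 2 * (∑ i ∈ Finset.range k, (w i) ^ 2)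
      + ∑ i ∈ Finset.Ico k m, (σ i) ^ 2)
    (hbk1 : (if k < m then
        (σ k / w k) ^ 2 * (∑ i ∈ Finset.range (k + 1), (w i) ^ 2)
          + ∑ i ∈ Finset.Ico (k + 1) m, (σ i) ^ 2
      else 0) < η) :
    0 < Real.sqrt ((η - ∑ i ∈ Finset.Ico k m, (σ i) ^ 2) / (∑ i ∈ Finset.range k, (w i) ^ 2)) ∧
    (∑ i ∈ Finset.range m, min ((σ i) ^ 2)
        (Real.sqrt ((η - ∑ i ∈ Finset.Ico k m, (σ i) ^ 2)
            / (∑ i ∈ Finset.range k, (w i) ^ 2)) ^ 2 * (w i) ^ 2)) = η ∧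
    ∀ lam : ℝ, 0 < lam →
      (∑ i ∈ Finset.range m, min ((σ i) ^ 2) (lam ^ 2 * (w i) ^ 2)) = η →
      lam = Real.sqrt ((η - ∑ i ∈ Finset.Ico k m, (σ i) ^ 2)
        / (∑ i ∈ Finset.range k, (w i) ^ 2)) := by
  classical
  set T := ∑ i ∈ Finset.Ico k m, (σ i) ^ 2 with hTdef
  set W := ∑ i ∈ Finset.range k, (w i) ^ 2 with hWdef
  have hWpos : 0 < W := Finset.sum_pos
    (fun i hi => pow_pos (hwpos i (lt_of_lt_of_le (Finset.mem_range.mp hi) hkm)) 2)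
    (Finset.nonempty_range_iff.mpr (by omega))
  -- monotonicity
  have hσle : ∀ j, j < m → ∀ i, i ≤ j → σ j ≤ σ i := by
    intro j
    induction j with
    | zero =>
      intro _ i hi
      have h0 : i = 0 := Nat.le_zero.mp hi
      rw [h0]
    | succ n ih =>
      intro hjm i hi
      rcases Nat.eq_or_lt_of_le hi with h | h
      · rw [h]
      · exact (hord n hjm).trans (ih (by omega) i (by omega))
  have hwle : ∀ j, j < m → ∀ i, i ≤ j → w i ≤ w j := by
    intro j
    induction j with
    | zero =>
      intro _ i hi
      have h0 : i = 0 := Nat.le_zero.mp hi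
      rw [h0]
    | succ n ih =>
      intro hjm i hi
      rcases Nat.eq_or_lt_of_le hi with h | h
      · rw [h]
      · exact (ih (by omega) i (by omega)).trans (hwmono n hjm)
  have hratio : ∀ i j, i ≤ j → j < m → (σ j / w j) ^ 2 ≤ (σ i / w i) ^ 2 := by
    intro i j hij hjm
    have him : i < m := lt_of_le_of_lt hij hjm
    have h1 : σ j / w j ≤ σ i / w i :=
      div_le_div₀ (hnn i him) (hσle j hjm i hij) (hwpos i him) (hwle j hjm i hij)
    have h0 : 0 ≤ σ j / w j := div_nonneg (hnn j hjm) (hwpos j hjm).le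
    exact pow_le_pow_left₀ h0 h1 2
  -- key strict inequality for k < m
  have hkey : k < m → (σ k / w k) ^ 2 * W + T < η := by
    intro hkm'
    rw [if_pos hkm'] at hbk1
    have hsum1 : ∑ i ∈ Finset.range (k + 1), (w i) ^ 2 = W + (w k) ^ 2 :=
      Finset.sum_range_succ _ _
    have hsum2 : T = (σ k) ^ 2 + ∑ i ∈ Finset.Ico (k + 1) m, (σ i) ^ 2 :=
      Finset.sum_eq_sum_Ico_succ_bot hkm' _
    have hwk : (w k) ≠ 0 := (hwpos k hkm').ne'
    have hcan : (σ k / w k) ^ 2 * (w k) ^ 2 = (σ k) ^ 2 := by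
      field_simp
    rw [hsum1, mul_add, hcan] at hbk1
    linarith
  have hE : T < η := by
    by_cases hkm' : k < m
    · have := hkey hkm'
      nlinarith [mul_nonneg (sq_nonneg (σ k / w k)) hWpos.le]
    · have hkm'' : k = m := by omega
      have : T = 0 := by rw [hTdef, hkm'', Finset.Ico_self, Finset.sum_empty]
      linarith
  set L := Real.sqrt ((η - T) / W) with hLdef
  have hL2 : L ^ 2 = (η - T) / W :=
    Real.sq_sqrt (le_of_lt (div_pos (by linarith) hWpos))
  have hLpos : 0 < L := Real.sqrt_pos.mpr (div_pos (by linarith) hWpos)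
  -- below-threshold terms
  have hlow : ∀ i, i < k → L ^ 2 * (w i) ^ 2 ≤ (σ i) ^ 2 := by
    intro i hik
    have him : i < m := lt_of_lt_of_le hik hkm
    have hk1m : k - 1 < m := by omega
    have hr : (σ (k - 1) / w (k - 1)) ^ 2 ≤ (σ i / w i) ^ 2 :=
      hratio i (k - 1) (by omega) hk1m
    have h1 : η - T ≤ (σ i / w i) ^ 2 * W := by
      have := mul_le_mul_of_nonneg_right hr hWpos.le
      linarith
    rw [hL2, div_mul_eq_mul_div, div_le_iff₀ hWpos]
    have hwi : w i ≠ 0 := (hwpos i him).ne'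
    have h2 : (σ i / w i) ^ 2 * W * (w i) ^ 2 = (σ i) ^ 2 * W := by
      field_simp
    have h3 := mul_le_mul_of_nonneg_right h1 (pow_pos (hwpos i him) 2).le
    linarith
  -- above-threshold terms
  have hhigh : ∀ i, k ≤ i → i < m → (σ i) ^ 2 ≤ L ^ 2 * (w i) ^ 2 := by
    intro i hki him
    have hkm' : k < m := lt_of_le_of_lt hki him
    have hkey' := hkey hkm'
    have hr : (σ i / w i) ^ 2 ≤ (σ k / w k) ^ 2 := hratio k i hki him
    have h1 : (σ i / w i) ^ 2 * W ≤ η - T := by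
      have := mul_le_mul_of_nonneg_right hr hWpos.le
      linarith
    rw [hL2, div_mul_eq_mul_div, le_div_iff₀ hWpos]
    have hwi : w i ≠ 0 := (hwpos i him).ne'
    have h2 : (σ i / w i) ^ 2 * W * (w i) ^ 2 = (σ i) ^ 2 * W := by
      field_simp
    have h3 := mul_le_mul_of_nonneg_right h1 (pow_pos (hwpos i him) 2).le
    linarith
  -- value of ψ at L
  have hsplit : ∀ f : ℕ → ℝ, ∑ i ∈ Finset.range m, f i
      = ∑ i ∈ Finset.range k, f i + ∑ i ∈ Finset.Ico k m, f i := by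
    intro f
    exact (Finset.sum_range_add_sum_Ico f hkm).symm
  have hval : ∑ i ∈ Finset.range m, min ((σ i) ^ 2) (L ^ 2 * (w i) ^ 2) = η := by
    rw [hsplit]
    have e1 : ∑ i ∈ Finset.range k, min ((σ i) ^ 2) (L ^ 2 * (w i) ^ 2) = L ^ 2 * W := by
      rw [hWdef, Finset.mul_sum]
      exact Finset.sum_congr rfl fun i hi =>
        min_eq_right (hlow i (Finset.mem_range.mp hi))
    have e2 : ∑ i ∈ Finset.Ico k m, min ((σ i) ^ 2) (L ^ 2 * (w i) ^ 2) = T := by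
      rw [hTdef]
      exact Finset.sum_congr rfl fun i hi =>
        min_eq_left (hhigh i (Finset.mem_Ico.mp hi).1 (Finset.mem_Ico.mp hi).2)
    rw [e1, e2, hL2, div_mul_cancel₀ _ hWpos.ne']
    ring
  -- witness of strict slack
  have hwit : ∃ i ∈ Finset.range m, L ^ 2 * (w i) ^ 2 < (σ i) ^ 2 := by
    by_contra h
    push_neg at h
    have hle : ∑ i ∈ Finset.range m, (σ i) ^ 2
        ≤ ∑ i ∈ Finset.range m, min ((σ i) ^ 2) (L ^ 2 * (w i) ^ 2) :=
      Finset.sum_le_sum fun i hi => le_min le_rfl (h i hi)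
    rw [hval] at hle
    linarith
  obtain ⟨i₀, hi₀m, hi₀⟩ := hwit
  have hw0 : (0 : ℝ) < (w i₀) ^ 2 := pow_pos (hwpos i₀ (Finset.mem_range.mp hi₀m)) 2
  refine ⟨hLpos, hval, ?_⟩
  intro lam hlam hlameq
  rcases lt_trichotomy lam L with h | h | h
  · exfalso
    have hsq : lam ^ 2 < L ^ 2 := by nlinarith
    have hlt : ∑ i ∈ Finset.range m, min ((σ i) ^ 2) (lam ^ 2 * (w i) ^ 2)
        < ∑ i ∈ Finset.range m, min ((σ i) ^ 2) (L ^ 2 * (w i) ^ 2) := by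
      apply Finset.sum_lt_sum
      · intro i hi
        exact min_le_min le_rfl (mul_le_mul_of_nonneg_right hsq.le (sq_nonneg _))
      · refine ⟨i₀, hi₀m, ?_⟩
        have h1 : lam ^ 2 * (w i₀) ^ 2 < L ^ 2 * (w i₀) ^ 2 :=
          mul_lt_mul_of_pos_right hsq hw0
        rw [min_eq_right (le_of_lt (h1.trans hi₀)), min_eq_right hi₀.le]
        exact h1
    rw [hlameq, hval] at hlt
    linarith
  · exact h
  · exfalso
    have hsq : L ^ 2 < lam ^ 2 := by nlinarith
    have hlt : ∑ i ∈ Finset.range m, min ((σ i) ^ 2) (L ^ 2 * (w i) ^ 2)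
        < ∑ i ∈ Finset.range m, min ((σ i) ^ 2) (lam ^ 2 * (w i) ^ 2) := by
      apply Finset.sum_lt_sum
      · intro i hi
        exact min_le_min le_rfl (mul_le_mul_of_nonneg_right hsq.le (sq_nonneg _))
      · refine ⟨i₀, hi₀m, ?_⟩
        have h1 : L ^ 2 * (w i₀) ^ 2 < lam ^ 2 * (w i₀) ^ 2 :=
          mul_lt_mul_of_pos_right hsq hw0
        rw [min_eq_right hi₀.le]
        exact lt_min hi₀ h1
    rw [hlameq, hval] at hlt
    linarith
end

section
/- Let Y be an m×n real matrix (m ≤ n) with singular value decomposition Y = Σᵢ₌₁^m σ_{Y,i}·uᵢvᵢᵀ, where u₁,…,u_m and v₁,…,v_m are orthonormal families in ℝ^m and ℝ^n respectively and σ_{Y,1} ≥ … ≥ σ_{Y,m} ≥ 0, and let λ > 0. Then the matrix X̂ = Σᵢ₌₁^m max(σ_{Y,i} − λ, 0)·uᵢvᵢᵀ is a global minimizer over all m×n real matrices X of ‖X‖_* + (1/(2λ))·‖X − Y‖_F², where ‖X‖_* = Σᵢ₌₁^m σ_{X,i} is the nuclear norm of X. -/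
open Finset Matrix in
lemma orth_pair {M N : ℕ} {v : Fin M → Fin N → ℝ}
    (hv : ∀ i j, ∑ k, v i k * v j k = if i = j then (1 : ℝ) else 0)
    (c d : Fin M → ℝ) :
    ∑ k, (∑ i, c i * v i k) * (∑ i, d i * v i k) = ∑ i, c i * d i := by
  calc ∑ k, (∑ i, c i * v i k) * (∑ i, d i * v i k)
      = ∑ k, ∑ i, ∑ i', (c i * d i') * (v i k * v i' k) := by
        refine sum_congr rfl fun k _ => ?_
        rw [sum_mul_sum]
        exact sum_congr rfl fun i _ => sum_congr rfl fun i' _ => by ring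
    _ = ∑ i, ∑ i', (c i * d i') * ∑ k, v i k * v i' k := by
        rw [sum_comm]
        refine sum_congr rfl fun i _ => ?_
        rw [sum_comm]
        exact sum_congr rfl fun i' _ => by rw [mul_sum]
    _ = ∑ i, c i * d i := by
        simp only [hv, mul_ite, mul_one, mul_zero]
        simp

open Finset Matrix in
lemma rows_ortho {N : ℕ} {f : Fin N → Fin N → ℝ}
    (hf : ∀ i j, ∑ k, f i k * f j k = if i = j then (1 : ℝ) else 0) :
    ∀ k k', ∑ j, f j k * f j k' = if k = k' then (1 : ℝ) else 0 := by
  set U : Matrix (Fin N) (Fin N) ℝ := Matrix.of fun i k => f i k with hU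
  have h1 : U * U.transpose = 1 := by
    ext i j
    simp only [Matrix.mul_apply, Matrix.transpose_apply, hU, Matrix.of_apply, Matrix.one_apply]
    exact hf i j
  have h2 : U.transpose * U = 1 := mul_eq_one_comm.mp h1
  intro k k'
  have := congrFun (congrFun h2 k) k'
  simpa [Matrix.mul_apply, Matrix.transpose_apply, hU, Matrix.one_apply, mul_comm] using this

open Finset Matrix in
lemma expand_inner {M N : ℕ} {f : Fin N → Fin N → ℝ}
    (hfr : ∀ k k', ∑ j, f j k * f j k' = if k = k' then (1 : ℝ) else 0)
    (A B : Fin M → Fin N → ℝ) :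
    ∑ a, ∑ k, A a k * B a k
      = ∑ j, ∑ a, (∑ k, A a k * f j k) * (∑ k, B a k * f j k) := by
  have step : ∀ a, ∑ j, (∑ k, A a k * f j k) * (∑ k, B a k * f j k)
      = ∑ k, A a k * B a k := by
    intro a
    calc ∑ j, (∑ k, A a k * f j k) * (∑ k, B a k * f j k)
        = ∑ j, ∑ k, ∑ k', (A a k * B a k') * (f j k * f j k') := by
          refine sum_congr rfl fun j _ => ?_
          rw [sum_mul_sum]
          exact sum_congr rfl fun k _ => sum_congr rfl fun k' _ => by ring
      _ = ∑ k, ∑ k', (A a k * B a k') * ∑ j, f j k * f j k' := by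
          rw [sum_comm]
          refine sum_congr rfl fun k _ => ?_
          rw [sum_comm]
          exact sum_congr rfl fun k' _ => by rw [mul_sum]
      _ = ∑ k, A a k * B a k := by
          simp only [hfr, mul_ite, mul_one, mul_zero]
          simp
  calc ∑ a, ∑ k, A a k * B a k
      = ∑ a, ∑ j, (∑ k, A a k * f j k) * (∑ k, B a k * f j k) :=
        sum_congr rfl fun a _ => (step a).symm
    _ = ∑ j, ∑ a, (∑ k, A a k * f j k) * (∑ k, B a k * f j k) := Finset.sum_comm

open Finset Matrix in
lemma orth_bessel {M N : ℕ} {v : Fin M → Fin N → ℝ}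
    (hv : ∀ i j, ∑ k, v i k * v j k = if i = j then (1 : ℝ) else 0)
    (y : Fin N → ℝ) :
    ∑ i, (∑ k, v i k * y k) * (∑ k, v i k * y k) ≤ ∑ k, y k * y k := by
  set c : Fin M → ℝ := fun i => ∑ k, v i k * y k with hc
  have h1 : ∑ k, (∑ i, c i * v i k) * (∑ i, c i * v i k) = ∑ i, c i * c i :=
    orth_pair hv c c
  have h2 : ∑ k, y k * (∑ i, c i * v i k) = ∑ i, c i * c i := by
    calc ∑ k, y k * (∑ i, c i * v i k) = ∑ k, ∑ i, c i * (v i k * y k) := by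
          refine sum_congr rfl fun k _ => ?_
          rw [mul_sum]
          exact sum_congr rfl fun i _ => by ring
      _ = ∑ i, c i * ∑ k, v i k * y k := by
          rw [sum_comm]
          exact sum_congr rfl fun i _ => by rw [mul_sum]
      _ = ∑ i, c i * c i := rfl
  have h0 : 0 ≤ ∑ k, (y k - ∑ i, c i * v i k) * (y k - ∑ i, c i * v i k) :=
    sum_nonneg fun k _ => mul_self_nonneg _
  have hexp : ∑ k, (y k - ∑ i, c i * v i k) * (y k - ∑ i, c i * v i k)
      = ∑ k, y k * y k - ∑ i, c i * c i := by
    have : ∀ k, (y k - ∑ i, c i * v i k) * (y k - ∑ i, c i * v i k)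
        = y k * y k - 2 * (y k * (∑ i, c i * v i k))
          + (∑ i, c i * v i k) * (∑ i, c i * v i k) := fun k => by ring
    rw [sum_congr rfl fun k _ => this k, sum_add_distrib, sum_sub_distrib, ← mul_sum, h1, h2]
    ring
  have := hexp ▸ h0
  linarith

open Finset Matrix in
lemma nuclear_sum_eq {m n : ℕ} (hmn : m ≤ n) (X : Matrix (Fin m) (Fin n) ℝ) :
    ∑ i, singularValues hmn X i
      = ∑ j, Real.sqrt ((Matrix.isHermitian_conjTranspose_mul_self X).eigenvalues j) := by
  set ev := (Matrix.isHermitian_conjTranspose_mul_self X).eigenvalues with hev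
  set τ := Tuple.sort ev with hτ
  have hnn : ∀ j, 0 ≤ ev j := fun j =>
    (Matrix.posSemidef_conjTranspose_mul_self (R := ℝ) X).eigenvalues_nonneg j
  have hcard : (Finset.univ.filter fun j => ev j ≠ 0).card ≤ m := by
    have h1 : X.rank ≤ m := Matrix.rank_le_height X
    have h2 : (Xᴴ * X).rank = X.rank := Matrix.rank_conjTranspose_mul_self X
    have h3 := (Matrix.isHermitian_conjTranspose_mul_self X).rank_eq_card_non_zero_eigs
    simp only [← hev] at h3
    rw [h2, Fintype.card_subtype] at h3
    omega
  have hzero : ∀ j : Fin n, (j : ℕ) < n - m → ev (τ j) = 0 := by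
    intro j hj
    by_contra hne
    have hpos : 0 < ev (τ j) := lt_of_le_of_ne (hnn _) (Ne.symm hne)
    have hsub : Finset.Ici j ⊆ Finset.univ.filter (fun k => ev (τ k) ≠ 0) := by
      intro k hk
      simp only [Finset.mem_Ici] at hk
      have hmono := Tuple.monotone_sort ev hk
      simp only [Function.comp_apply] at hmono
      simp only [Finset.mem_filter, Finset.mem_univ, true_and]
      intro h0
      rw [h0] at hmono
      linarith
    have hc1 : (Finset.Ici j).card = n - (j : ℕ) := Fin.card_Ici j
    have hc2 : (Finset.univ.filter fun k => ev (τ k) ≠ 0).card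
        = (Finset.univ.filter fun k => ev k ≠ 0).card := by
      apply Finset.card_bij (fun k _ => τ k)
      · intro k hk
        simp only [Finset.mem_filter, Finset.mem_univ, true_and] at hk ⊢
        exact hk
      · intro a ha b hb hab
        exact τ.injective hab
      · intro b hb
        refine ⟨τ.symm b, ?_, by simp⟩
        simp only [Finset.mem_filter, Finset.mem_univ, true_and, Equiv.apply_symm_apply] at hb ⊢
        exact hb
    have hle := Finset.card_le_card hsub
    rw [hc1, hc2] at hle
    omega
  have himg : Finset.image (fun i : Fin m => Fin.rev (Fin.castLE hmn i)) Finset.univ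
      = Finset.univ.filter (fun j : Fin n => ¬ (j : ℕ) < n - m) := by
    ext j
    simp only [Finset.mem_image, Finset.mem_univ, true_and, Finset.mem_filter]
    constructor
    · rintro ⟨i, rfl⟩
      have hi := i.isLt
      simp only [Fin.val_rev, Fin.coe_castLE]
      omega
    · intro hj
      have hjlt := j.isLt
      refine ⟨⟨n - 1 - (j : ℕ), by omega⟩, ?_⟩
      apply Fin.ext
      simp only [Fin.val_rev, Fin.coe_castLE]
      omega
  have hinj : ∀ a ∈ Finset.univ, ∀ b ∈ Finset.univ,
      Fin.rev (Fin.castLE hmn a) = Fin.rev (Fin.castLE hmn b) → a = b := by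
    intro a _ b _ hab
    have := congrArg Fin.val hab
    simp only [Fin.val_rev, Fin.coe_castLE] at this
    have ha := a.isLt; have hb := b.isLt
    exact Fin.ext (by omega)
  calc ∑ i : Fin m, singularValues hmn X i
      = ∑ i : Fin m, Real.sqrt (ev (τ (Fin.rev (Fin.castLE hmn i)))) := rfl
    _ = ∑ j ∈ Finset.univ.filter (fun j : Fin n => ¬ (j : ℕ) < n - m),
          Real.sqrt (ev (τ j)) := by
        rw [← himg, Finset.sum_image hinj]
    _ = ∑ j : Fin n, Real.sqrt (ev (τ j)) := by
        rw [← Finset.sum_filter_add_sum_filter_not Finset.univ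
          (fun j : Fin n => (j : ℕ) < n - m) (fun j => Real.sqrt (ev (τ j)))]
        have : ∑ j ∈ Finset.univ.filter (fun j : Fin n => (j : ℕ) < n - m),
            Real.sqrt (ev (τ j)) = 0 := by
          apply Finset.sum_eq_zero
          intro j hj
          simp only [Finset.mem_filter, Finset.mem_univ, true_and] at hj
          rw [hzero j hj, Real.sqrt_zero]
        rw [this, zero_add]
    _ = ∑ j : Fin n, Real.sqrt (ev j) := by
        exact Equiv.sum_comp τ (fun j => Real.sqrt (ev j))

open Finset Matrix in
lemma uv_inner {m n : ℕ} {u : Fin m → Fin m → ℝ} {v : Fin m → Fin n → ℝ}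
    (hu : ∀ i j, ∑ k, u i k * u j k = if i = j then (1 : ℝ) else 0)
    (hv : ∀ i j, ∑ k, v i k * v j k = if i = j then (1 : ℝ) else 0)
    (c d : Fin m → ℝ) :
    ∑ a, ∑ k, (∑ i, c i * (u i a * v i k)) * (∑ i, d i * (u i a * v i k))
      = ∑ i, c i * d i := by
  have step : ∀ a, ∑ k, (∑ i, (c i * u i a) * v i k) * (∑ i, (d i * u i a) * v i k)
      = ∑ i, (c i * u i a) * (d i * u i a) := fun a => orth_pair hv _ _
  calc ∑ a, ∑ k, (∑ i, c i * (u i a * v i k)) * (∑ i, d i * (u i a * v i k))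
      = ∑ a, ∑ i, (c i * u i a) * (d i * u i a) := by
        refine sum_congr rfl fun a _ => ?_
        rw [← step a]
        refine sum_congr rfl fun k _ => ?_
        congr 1
        · exact sum_congr rfl fun i _ => by ring
        · exact sum_congr rfl fun i _ => by ring
    _ = ∑ i, ∑ a, (c i * d i) * (u i a * u i a) := by
        rw [sum_comm]
        exact sum_congr rfl fun i _ => sum_congr rfl fun a _ => by ring
    _ = ∑ i, (c i * d i) * ∑ a, u i a * u i a :=
        sum_congr rfl fun i _ => (Finset.mul_sum _ _ _).symm
    _ = ∑ i, c i * d i := by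
        refine sum_congr rfl fun i _ => ?_
        rw [hu i i]
        simp

open Finset Matrix in
lemma nuclear_ge_inner {m n : ℕ} {u : Fin m → Fin m → ℝ} {v : Fin m → Fin n → ℝ}
    (hu : ∀ i j, ∑ k, u i k * u j k = if i = j then (1 : ℝ) else 0)
    (hv : ∀ i j, ∑ k, v i k * v j k = if i = j then (1 : ℝ) else 0)
    (wt : Fin m → ℝ) (hwt : ∀ i, 0 ≤ wt i ∧ wt i ≤ 1)
    (X : Matrix (Fin m) (Fin n) ℝ) :
    ∑ a, ∑ k, (∑ i, wt i * (u i a * v i k)) * X a k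
      ≤ ∑ j, Real.sqrt ((Matrix.isHermitian_conjTranspose_mul_self X).eigenvalues j) := by
  have hB := Matrix.isHermitian_conjTranspose_mul_self X
  set ev : Fin n → ℝ := (Matrix.isHermitian_conjTranspose_mul_self X).eigenvalues with hev
  set f : Fin n → Fin n → ℝ := fun j k => hB.eigenvectorBasis j k with hf
  set W : Fin m → Fin n → ℝ := fun a k => ∑ i, wt i * (u i a * v i k) with hW
  have hfo : ∀ j j', ∑ k, f j k * f j' k = if j = j' then (1:ℝ) else 0 := by
    intro j j'
    have h := (orthonormal_iff_ite.mp hB.eigenvectorBasis.orthonormal) j j'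
    simpa [PiLp.inner_apply, RCLike.inner_apply, starRingEnd_apply, hf, mul_comm] using h
  have heig : ∀ j k, ∑ k', (Xᴴ * X) k k' * f j k' = ev j * f j k := by
    intro j k
    have h := congrFun (hB.mulVec_eigenvectorBasis j) k
    simpa [Matrix.mulVec, dotProduct, hf, hev] using h
  have hBex : ∀ k k', (Xᴴ * X) k k' = ∑ a, X a k * X a k' := by
    intro k k'
    simp [Matrix.mul_apply, Matrix.conjTranspose_apply]
  have hnn : ∀ j, 0 ≤ ev j := fun j =>
    (Matrix.posSemidef_conjTranspose_mul_self (R := ℝ) X).eigenvalues_nonneg j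
  -- ‖X f_j‖² = ev j
  have hXf : ∀ j, ∑ a, (∑ k, X a k * f j k) * (∑ k, X a k * f j k) = ev j := by
    intro j
    calc ∑ a, (∑ k, X a k * f j k) * (∑ k, X a k * f j k)
        = ∑ a, ∑ k, ∑ k', (f j k * f j k') * (X a k * X a k') := by
          refine sum_congr rfl fun a _ => ?_
          rw [sum_mul_sum]
          exact sum_congr rfl fun k _ => sum_congr rfl fun k' _ => by ring
      _ = ∑ k, ∑ k', (f j k * f j k') * ∑ a, X a k * X a k' := by
          rw [sum_comm]
          refine sum_congr rfl fun k _ => ?_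
          rw [sum_comm]
          exact sum_congr rfl fun k' _ => by rw [mul_sum]
      _ = ∑ k, f j k * ∑ k', (Xᴴ * X) k k' * f j k' := by
          refine sum_congr rfl fun k _ => ?_
          rw [mul_sum]
          refine sum_congr rfl fun k' _ => ?_
          rw [hBex]; ring
      _ = ∑ k, f j k * (ev j * f j k) := by
          exact sum_congr rfl fun k _ => by rw [heig]
      _ = ev j * ∑ k, f j k * f j k := by
          rw [mul_sum]
          exact sum_congr rfl fun k _ => by ring
      _ = ev j := by rw [hfo j j]; simp
  -- ‖W f_j‖² ≤ 1
  have hWf : ∀ j, ∑ a, (∑ k, W a k * f j k) * (∑ k, W a k * f j k) ≤ 1 := by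
    intro j
    set c : Fin m → ℝ := fun i => ∑ k, v i k * f j k with hc
    have hWfa : ∀ a, ∑ k, W a k * f j k = ∑ i, (wt i * c i) * u i a := by
      intro a
      calc ∑ k, W a k * f j k
          = ∑ k, ∑ i, (wt i * u i a) * (v i k * f j k) := by
            refine sum_congr rfl fun k _ => ?_
            rw [hW, sum_mul]
            exact sum_congr rfl fun i _ => by ring
        _ = ∑ i, (wt i * u i a) * ∑ k, v i k * f j k := by
            rw [sum_comm]
            exact sum_congr rfl fun i _ => by rw [mul_sum]
        _ = ∑ i, (wt i * c i) * u i a := sum_congr rfl fun i _ => by rw [hc]; ring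
    calc ∑ a, (∑ k, W a k * f j k) * (∑ k, W a k * f j k)
        = ∑ a, (∑ i, (wt i * c i) * u i a) * (∑ i, (wt i * c i) * u i a) := by
          exact sum_congr rfl fun a _ => by rw [hWfa]
      _ = ∑ i, (wt i * c i) * (wt i * c i) := orth_pair hu _ _
      _ ≤ ∑ i, c i * c i := by
          apply sum_le_sum
          intro i _
          have h1 := (hwt i).1; have h2 := (hwt i).2
          have key : wt i * c i * (wt i * c i) = (wt i * wt i) * (c i * c i) := by ring
          rw [key]
          have h3 : wt i * wt i ≤ 1 := mul_le_one₀ h2 h1 h2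
          calc (wt i * wt i) * (c i * c i) ≤ 1 * (c i * c i) :=
                mul_le_mul_of_nonneg_right h3 (mul_self_nonneg _)
            _ = c i * c i := one_mul _
      _ ≤ ∑ k, f j k * f j k := orth_bessel hv _
      _ = 1 := by rw [hfo j j]; simp
  -- combine
  have hfr := rows_ortho hfo
  rw [expand_inner hfr W X]
  have hterm : ∀ j, ∑ a, (∑ k, W a k * f j k) * (∑ k, X a k * f j k)
      ≤ Real.sqrt (ev j) := by
    intro j
    set p : Fin m → ℝ := fun a => ∑ k, W a k * f j k with hp
    set q : Fin m → ℝ := fun a => ∑ k, X a k * f j k with hq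
    have hcs := sum_mul_sq_le_sq_mul_sq Finset.univ p q
    have h1 : ∑ a, p a ^ 2 ≤ 1 := by
      have := hWf j
      simpa [pow_two] using this
    have h2 : ∑ a, q a ^ 2 = ev j := by
      have := hXf j
      simpa [pow_two] using this
    have h3 : (∑ a, p a * q a) ^ 2 ≤ ev j := by
      have hq0 : (0:ℝ) ≤ ∑ a, q a ^ 2 := sum_nonneg fun a _ => sq_nonneg _
      calc (∑ a, p a * q a) ^ 2 ≤ (∑ a, p a ^ 2) * (∑ a, q a ^ 2) := hcs
        _ ≤ 1 * (∑ a, q a ^ 2) := mul_le_mul_of_nonneg_right h1 hq0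
        _ = ev j := by rw [one_mul, h2]
    calc ∑ a, p a * q a ≤ |∑ a, p a * q a| := le_abs_self _
      _ = Real.sqrt ((∑ a, p a * q a) ^ 2) := (Real.sqrt_sq_eq_abs _).symm
      _ ≤ Real.sqrt (ev j) := Real.sqrt_le_sqrt h3
  exact sum_le_sum fun j _ => hterm j

open Finset Matrix in
lemma nuclear_of_sum_rank_one {m n : ℕ} {u : Fin m → Fin m → ℝ} {v : Fin m → Fin n → ℝ}
    (hu : ∀ i j, ∑ k, u i k * u j k = if i = j then (1 : ℝ) else 0)
    (hv : ∀ i j, ∑ k, v i k * v j k = if i = j then (1 : ℝ) else 0)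
    (w : Fin m → ℝ) (hw : ∀ i, 0 ≤ w i)
    (Z : Matrix (Fin m) (Fin n) ℝ)
    (hZ : ∀ a k, Z a k = ∑ i, w i * (u i a * v i k)) :
    ∑ j, Real.sqrt ((Matrix.isHermitian_conjTranspose_mul_self Z).eigenvalues j)
      = ∑ i, w i := by
  have hB := Matrix.isHermitian_conjTranspose_mul_self Z
  set ev : Fin n → ℝ := (Matrix.isHermitian_conjTranspose_mul_self Z).eigenvalues with hev
  set f : Fin n → Fin n → ℝ := fun j k => hB.eigenvectorBasis j k with hf
  set S : Fin n → Fin n → ℝ := fun k k' => ∑ i, w i * (v i k * v i k') with hS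
  have hfo : ∀ j j', ∑ k, f j k * f j' k = if j = j' then (1:ℝ) else 0 := by
    intro j j'
    have h := (orthonormal_iff_ite.mp hB.eigenvectorBasis.orthonormal) j j'
    simpa [PiLp.inner_apply, RCLike.inner_apply, starRingEnd_apply, hf, mul_comm] using h
  have heig : ∀ j k, ∑ k', (Zᴴ * Z) k k' * f j k' = ev j * f j k := by
    intro j k
    have h := congrFun (hB.mulVec_eigenvectorBasis j) k
    simpa [Matrix.mulVec, dotProduct, hf, hev] using h
  have hnn : ∀ j, 0 ≤ ev j := fun j =>
    (Matrix.posSemidef_conjTranspose_mul_self (R := ℝ) Z).eigenvalues_nonneg j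
  -- S is symmetric
  have hSsymm : ∀ k k', S k k' = S k' k := by
    intro k k'
    exact sum_congr rfl fun i _ => by ring
  -- S * S = Zᴴ * Z
  have hSS : ∀ k k', ∑ k'', S k k'' * S k'' k' = (Zᴴ * Z) k k' := by
    intro k k'
    have hL : ∑ k'', S k k'' * S k'' k'
        = ∑ k'', (∑ i, (w i * v i k) * v i k'') * (∑ i, (w i * v i k') * v i k'') := by
      refine sum_congr rfl fun k'' _ => ?_
      rw [hS]
      congr 1
      · exact sum_congr rfl fun i _ => by ring
      · exact sum_congr rfl fun i _ => by ring
    have hR : (Zᴴ * Z) k k'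
        = ∑ a, (∑ i, (w i * v i k) * u i a) * (∑ i, (w i * v i k') * u i a) := by
      rw [Matrix.mul_apply]
      refine sum_congr rfl fun a _ => ?_
      rw [Matrix.conjTranspose_apply]
      simp only [RCLike.star_def, starRingEnd_apply, star_trivial]
      rw [hZ a k, hZ a k']
      congr 1
      · exact sum_congr rfl fun i _ => by ring
      · exact sum_congr rfl fun i _ => by ring
    rw [hL, hR, orth_pair hv _ _, orth_pair hu _ _]
  -- S is positive semidefinite (as a quadratic form)
  have hSpsd : ∀ y : Fin n → ℝ, 0 ≤ ∑ k, y k * (∑ k', S k k' * y k') := by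
    intro y
    have hSy : ∀ k, ∑ k', S k k' * y k'
        = ∑ i, (w i * (∑ k', v i k' * y k')) * v i k := by
      intro k
      calc ∑ k', S k k' * y k'
          = ∑ k', ∑ i, (w i * v i k) * (v i k' * y k') := by
            refine sum_congr rfl fun k' _ => ?_
            rw [hS, sum_mul]
            exact sum_congr rfl fun i _ => by ring
        _ = ∑ i, (w i * v i k) * ∑ k', v i k' * y k' := by
            rw [sum_comm]
            exact sum_congr rfl fun i _ => by rw [mul_sum]
        _ = ∑ i, (w i * (∑ k', v i k' * y k')) * v i k :=
            sum_congr rfl fun i _ => by ring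
    have hkey : ∑ k, y k * (∑ k', S k k' * y k')
        = ∑ i, w i * ((∑ k, v i k * y k) * (∑ k, v i k * y k)) := by
      calc ∑ k, y k * (∑ k', S k k' * y k')
          = ∑ k, ∑ i, (w i * (∑ k', v i k' * y k')) * (v i k * y k) := by
            refine sum_congr rfl fun k _ => ?_
            rw [hSy, mul_sum]
            exact sum_congr rfl fun i _ => by ring
        _ = ∑ i, (w i * (∑ k', v i k' * y k')) * ∑ k, v i k * y k := by
            rw [sum_comm]
            exact sum_congr rfl fun i _ => (Finset.mul_sum _ _ _).symm
        _ = ∑ i, w i * ((∑ k, v i k * y k) * (∑ k, v i k * y k)) :=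
            sum_congr rfl fun i _ => by ring
    rw [hkey]
    exact sum_nonneg fun i _ => mul_nonneg (hw i) (mul_self_nonneg _)
  -- S applied twice to an eigenvector f j gives ev j • f j
  have hSSf : ∀ j k, ∑ k', S k k' * (∑ k'', S k' k'' * f j k'') = ev j * f j k := by
    intro j k
    calc ∑ k', S k k' * (∑ k'', S k' k'' * f j k'')
        = ∑ k', ∑ k'', (S k k' * S k' k'') * f j k'' := by
          refine sum_congr rfl fun k' _ => ?_
          rw [mul_sum]
          exact sum_congr rfl fun k'' _ => by ring
      _ = ∑ k'', (∑ k', S k k' * S k' k'') * f j k'' := by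
          rw [sum_comm]
          exact sum_congr rfl fun k'' _ => by rw [sum_mul]
      _ = ∑ k'', (Zᴴ * Z) k k'' * f j k'' :=
          sum_congr rfl fun k'' _ => by rw [hSS]
      _ = ev j * f j k := heig j k
  -- self-adjointness of S as quadratic form
  have hSadj : ∀ g h : Fin n → ℝ,
      ∑ k, g k * (∑ k', S k k' * h k') = ∑ k, h k * (∑ k', S k k' * g k') := by
    intro g h
    calc ∑ k, g k * (∑ k', S k k' * h k')
        = ∑ k, ∑ k', S k k' * (g k * h k') := by
          refine sum_congr rfl fun k _ => ?_
          rw [mul_sum]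
          exact sum_congr rfl fun k' _ => by ring
      _ = ∑ k', ∑ k, S k' k * (h k' * g k) := by
          rw [sum_comm]
          refine sum_congr rfl fun k' _ => sum_congr rfl fun k _ => ?_
          rw [hSsymm]; ring
      _ = ∑ k, h k * (∑ k', S k k' * g k') := by
          refine sum_congr rfl fun k _ => ?_
          rw [mul_sum]
          exact sum_congr rfl fun k' _ => by ring
  -- ⟨f j, S f j⟩ = sqrt (ev j)
  have hsqrt : ∀ j, ∑ k, f j k * (∑ k', S k k' * f j k') = Real.sqrt (ev j) := by
    intro j
    rcases eq_or_lt_of_le (hnn j) with h0 | hpos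
    · -- ev j = 0
      have hSfsq : ∑ k, (∑ k', S k k' * f j k') * (∑ k', S k k' * f j k') = 0 := by
        have swap := hSadj (fun k => ∑ k', S k k' * f j k') (f j)
        rw [swap]
        calc ∑ k, f j k * (∑ k', S k k' * (∑ k'', S k' k'' * f j k''))
            = ∑ k, f j k * (ev j * f j k) :=
              sum_congr rfl fun k _ => by rw [hSSf]
          _ = ev j * ∑ k, f j k * f j k := by
              rw [mul_sum]; exact sum_congr rfl fun k _ => by ring
          _ = 0 := by rw [hfo j j]; simp [← h0]
      have hSf0 : ∀ k, (∑ k', S k k' * f j k') = 0 := by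
        intro k
        have hall := (Finset.sum_eq_zero_iff_of_nonneg
          (fun k _ => mul_self_nonneg ((fun k => ∑ k', S k k' * f j k') k))).mp hSfsq
        have := hall k (Finset.mem_univ k)
        exact mul_self_eq_zero.mp this
      calc ∑ k, f j k * (∑ k', S k k' * f j k')
          = ∑ k, f j k * 0 := sum_congr rfl fun k _ => by rw [hSf0]
        _ = 0 := by simp
        _ = Real.sqrt (ev j) := by rw [← h0, Real.sqrt_zero]
    · -- 0 < ev j
      set r := Real.sqrt (ev j) with hr
      have hr2 : r * r = ev j := Real.mul_self_sqrt (hnn j)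
      have hrpos : 0 < r := Real.sqrt_pos.mpr hpos
      set g : Fin n → ℝ := fun k => (∑ k', S k k' * f j k') - r * f j k with hg
      have hSg : ∀ k, (∑ k', S k k' * g k')
          = ev j * f j k - r * (∑ k', S k k' * f j k') := by
        intro k
        calc ∑ k', S k k' * g k'
            = ∑ k', (S k k' * (∑ k'', S k' k'' * f j k'') - r * (S k k' * f j k')) := by
              refine sum_congr rfl fun k' _ => ?_
              rw [hg]; ring
          _ = (∑ k', S k k' * (∑ k'', S k' k'' * f j k''))
                - r * ∑ k', S k k' * f j k' := by
              rw [sum_sub_distrib, mul_sum]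
          _ = ev j * f j k - r * (∑ k', S k k' * f j k') := by rw [hSSf]
      have hkey : ∀ k, (∑ k', S k k' * g k') + r * g k = 0 := by
        intro k
        rw [hSg k, hg]
        simp only
        linear_combination (- f j k) * hr2
      have hq : (∑ k, g k * (∑ k', S k k' * g k')) + r * ∑ k, g k * g k = 0 := by
        calc (∑ k, g k * (∑ k', S k k' * g k')) + r * ∑ k, g k * g k
            = ∑ k, g k * ((∑ k', S k k' * g k') + r * g k) := by
              rw [mul_sum, ← sum_add_distrib]
              exact sum_congr rfl fun k _ => by ring
          _ = 0 := sum_eq_zero fun k _ => by rw [hkey k, mul_zero]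
      have h1 : 0 ≤ ∑ k, g k * (∑ k', S k k' * g k') := hSpsd g
      have h2 : (0:ℝ) ≤ ∑ k, g k * g k := sum_nonneg fun k _ => mul_self_nonneg _
      have hgsq : ∑ k, g k * g k = 0 := by nlinarith
      have hg0 : ∀ k, g k = 0 := by
        intro k
        have hall := (Finset.sum_eq_zero_iff_of_nonneg
          (fun k _ => mul_self_nonneg (g k))).mp hgsq
        exact mul_self_eq_zero.mp (hall k (Finset.mem_univ k))
      have hSf : ∀ k, (∑ k', S k k' * f j k') = r * f j k := by
        intro k
        have := hg0 k
        rw [hg] at this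
        simp only at this
        linarith
      calc ∑ k, f j k * (∑ k', S k k' * f j k')
          = ∑ k, f j k * (r * f j k) := sum_congr rfl fun k _ => by rw [hSf]
        _ = r * ∑ k, f j k * f j k := by
            rw [mul_sum]; exact sum_congr rfl fun k _ => by ring
        _ = r := by rw [hfo j j]; simp
  -- assemble
  have hfr := rows_ortho hfo
  calc ∑ j, Real.sqrt (ev j)
      = ∑ j, ∑ k, f j k * (∑ k', S k k' * f j k') :=
        sum_congr rfl fun j _ => (hsqrt j).symm
    _ = ∑ j, ∑ k, ∑ k', S k k' * (f j k * f j k') := by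
        refine sum_congr rfl fun j _ => sum_congr rfl fun k _ => ?_
        rw [mul_sum]
        exact sum_congr rfl fun k' _ => by ring
    _ = ∑ k, ∑ k', S k k' * ∑ j, f j k * f j k' := by
        rw [sum_comm]
        refine sum_congr rfl fun k _ => ?_
        rw [sum_comm]
        refine sum_congr rfl fun k' _ => ?_
        rw [mul_sum]
    _ = ∑ k, S k k := by
        simp only [hfr, mul_ite, mul_one, mul_zero]
        simp
    _ = ∑ i, w i * ∑ k, v i k * v i k := by
        rw [sum_comm]
        exact sum_congr rfl fun i _ => by rw [mul_sum]
    _ = ∑ i, w i := by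
        refine sum_congr rfl fun i _ => ?_
        rw [hv i i]
        simp

open Finset Matrix in
/-- (Cai–Candès–Shen) If `Y = Σᵢ σ_{Y,i} uᵢvᵢᵀ` is an SVD of `Y` and `λ > 0`, then the
singular value thresholding `X̂ = Σᵢ max(σ_{Y,i} − λ, 0) uᵢvᵢᵀ` is a global minimizer of
the nuclear norm problem `min_X ‖X‖_* + (1/(2λ))‖X − Y‖_F²`. -/
theorem svt_minimizes_nuclear_norm_problem {m n : ℕ} (hmn : m ≤ n)
    (u : Fin m → Fin m → ℝ) (v : Fin m → Fin n → ℝ)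
    (hu : ∀ i j, ∑ k, u i k * u j k = if i = j then (1 : ℝ) else 0)
    (hv : ∀ i j, ∑ k, v i k * v j k = if i = j then (1 : ℝ) else 0)
    (σY : Fin m → ℝ) (hord : Antitone σY) (hnn : ∀ i, 0 ≤ σY i)
    (Y : Matrix (Fin m) (Fin n) ℝ)
    (hY : Y = Matrix.of fun j k => ∑ i, σY i * (u i j * v i k))
    (lam : ℝ) (hlam : 0 < lam)
    (Xhat : Matrix (Fin m) (Fin n) ℝ)
    (hXhat : Xhat = Matrix.of fun j k => ∑ i, max (σY i - lam) 0 * (u i j * v i k)) :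
    ∀ X : Matrix (Fin m) (Fin n) ℝ,
      (∑ i, singularValues hmn Xhat i) + (1 / (2 * lam)) * frobSq (Xhat - Y)
        ≤ (∑ i, singularValues hmn X i) + (1 / (2 * lam)) * frobSq (X - Y) := by
  intro X
  set w' : Fin m → ℝ := fun i => max (σY i - lam) 0 with hw'
  set wt : Fin m → ℝ := fun i => min (σY i) lam / lam with hwt
  have hw'nn : ∀ i, 0 ≤ w' i := fun i => le_max_right _ _
  have hwt01 : ∀ i, 0 ≤ wt i ∧ wt i ≤ 1 := by
    intro i
    constructor
    · exact div_nonneg (le_min (hnn i) hlam.le) hlam.le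
    · rw [hwt]
      exact div_le_one_of_le₀ (min_le_right _ _) hlam.le
  have hXhat' : ∀ a k, Xhat a k = ∑ i, w' i * (u i a * v i k) := by
    intro a k
    rw [hXhat]
    rfl
  have hwtw' : ∀ i, wt i * w' i = w' i := by
    intro i
    rcases le_total (σY i) lam with h | h
    · have : w' i = 0 := max_eq_right (by linarith)
      rw [this, mul_zero]
    · have h1 : min (σY i) lam = lam := min_eq_right h
      rw [hwt]
      simp only
      rw [h1, div_self hlam.ne', one_mul]
  have hdiff : ∀ a k, Xhat a k - Y a k
      = -(lam * ∑ i, wt i * (u i a * v i k)) := by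
    intro a k
    rw [hXhat', hY]
    show (∑ i, w' i * (u i a * v i k)) - (∑ i, σY i * (u i a * v i k))
      = -(lam * ∑ i, wt i * (u i a * v i k))
    rw [← Finset.sum_sub_distrib, Finset.mul_sum, ← Finset.sum_neg_distrib]
    refine sum_congr rfl fun i _ => ?_
    have hlw : lam * wt i = min (σY i) lam := by
      rw [hwt]
      field_simp
    have hkey : w' i - σY i = -(lam * wt i) := by
      rw [hlw, hw']
      simp only
      rcases le_total (σY i) lam with h | h
      · rw [max_eq_right (by linarith), min_eq_left h]
        ring
      · rw [max_eq_left (by linarith), min_eq_right h]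
        ring
    calc w' i * (u i a * v i k) - σY i * (u i a * v i k)
        = (w' i - σY i) * (u i a * v i k) := by ring
      _ = -(lam * wt i) * (u i a * v i k) := by rw [hkey]
      _ = -(lam * (wt i * (u i a * v i k))) := by ring
  -- nuclear norm of Xhat
  have hNXhat : ∑ i, singularValues hmn Xhat i = ∑ i, w' i := by
    rw [nuclear_sum_eq hmn Xhat]
    exact nuclear_of_sum_rank_one hu hv w' hw'nn Xhat hXhat'
  -- inner product of W with Xhat
  have hWXhat : ∑ a, ∑ k, (∑ i, wt i * (u i a * v i k)) * Xhat a k = ∑ i, w' i := by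
    calc ∑ a, ∑ k, (∑ i, wt i * (u i a * v i k)) * Xhat a k
        = ∑ a, ∑ k, (∑ i, wt i * (u i a * v i k)) * (∑ i, w' i * (u i a * v i k)) := by
          exact sum_congr rfl fun a _ => sum_congr rfl fun k _ => by rw [hXhat' a k]
      _ = ∑ i, wt i * w' i := uv_inner hu hv wt w'
      _ = ∑ i, w' i := sum_congr rfl fun i _ => hwtw' i
  -- key inequality
  have hkey := nuclear_ge_inner hu hv wt hwt01 X
  -- frobenius decomposition
  set A : ℝ := ∑ a, ∑ k, (∑ i, wt i * (u i a * v i k)) * X a k with hA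
  have hcross : ∑ a, ∑ k, (X a k - Xhat a k) * (Xhat a k - Y a k)
      = -(lam * A) + lam * ∑ i, w' i := by
    calc ∑ a, ∑ k, (X a k - Xhat a k) * (Xhat a k - Y a k)
        = ∑ a, ∑ k, (-(lam * ((∑ i, wt i * (u i a * v i k)) * X a k))
            + lam * ((∑ i, wt i * (u i a * v i k)) * Xhat a k)) := by
          refine sum_congr rfl fun a _ => sum_congr rfl fun k _ => ?_
          rw [hdiff a k]
          ring
      _ = -(lam * A) + lam * ∑ i, w' i := by
          rw [hA, ← hWXhat]
          simp only [Finset.sum_add_distrib, Finset.sum_neg_distrib, ← Finset.mul_sum]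
  have hfrob : frobSq (X - Y) = frobSq (X - Xhat)
      + 2 * (∑ a, ∑ k, (X a k - Xhat a k) * (Xhat a k - Y a k)) + frobSq (Xhat - Y) := by
    unfold frobSq
    simp only [Matrix.sub_apply, Finset.mul_sum]
    rw [← Finset.sum_add_distrib, ← Finset.sum_add_distrib]
    refine sum_congr rfl fun a _ => ?_
    rw [← Finset.sum_add_distrib, ← Finset.sum_add_distrib]
    refine sum_congr rfl fun k _ => ?_
    ring
  -- final arithmetic
  rw [← nuclear_sum_eq hmn X] at hkey
  rw [hNXhat, hfrob, hcross]
  have hF1 : 0 ≤ frobSq (X - Xhat) := by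
    unfold frobSq
    exact sum_nonneg fun a _ => sum_nonneg fun k _ => sq_nonneg _
  have hexp : (1 / (2 * lam)) * (frobSq (X - Xhat)
        + 2 * (-(lam * A) + lam * ∑ i, w' i) + frobSq (Xhat - Y))
      = (1 / (2 * lam)) * frobSq (X - Xhat) + ((∑ i, w' i) - A)
        + (1 / (2 * lam)) * frobSq (Xhat - Y) := by
    field_simp
    ring
  rw [hexp]
  have hcpos : 0 < 1 / (2 * lam) := by positivity
  have := mul_nonneg hcpos.le hF1
  linarith
end

section
/- Let Y be an m×n real matrix (m ≤ n) with singular value decomposition Y = Σᵢ₌₁^m σ_{Y,i}·uᵢvᵢᵀ, where u₁,…,u_m and v₁,…,v_m are orthonormal families in ℝ^m and ℝ^n respectively and σ_{Y,1} ≥ … ≥ σ_{Y,m} ≥ 0. Let λ > 0 and let r < m be a nonnegative integer. Then the partial singular value thresholding matrix PSVT_{r,λ}(Y) = Σᵢ₌₁^r σ_{Y,i}·uᵢvᵢᵀ + Σ_{i=r+1}^m max(σ_{Y,i} − λ, 0)·uᵢvᵢᵀ is a global minimizer over all m×n real matrices X of ‖X‖_r + (1/(2λ))·‖Y − X‖_F²,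 where ‖X‖_r = Σ_{i=r+1}^m σ_{X,i} is the truncated nuclear norm. -/
open scoped RealInnerProductSpace


open Finset in
lemma bessel_aux {ι κ : Type*} [Fintype ι] [DecidableEq ι] [Fintype κ] (p : ι → κ → ℝ)
    (ε : ι → ℝ)
    (hG : ∀ i j, ∑ k, p i k * p j k = if i = j then ε i else 0)
    (hε : ∀ i, ε i = 0 ∨ ε i = 1) (w : κ → ℝ) :
    ∑ i, (∑ k, p i k * w k) ^ 2 ≤ ∑ k, (w k) ^ 2 := by
  set c : ι → ℝ := fun i => ∑ k, p i k * w k with hc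
  have hczero : ∀ i, ε i = 0 → c i = 0 := by
    intro i hi
    have h0 : ∑ k, p i k * p i k = 0 := by rw [hG i i]; simp [hi]
    have hz : ∀ k ∈ univ, p i k = 0 := fun k hk => by
      have := (Finset.sum_eq_zero_iff_of_nonneg (fun k _ => mul_self_nonneg (p i k))).1 h0 k hk
      nlinarith [this]
    exact Finset.sum_eq_zero fun k hk => by rw [hz k hk, zero_mul]
  have e1 : ∑ k, w k * ∑ i, c i * p i k = ∑ i, (c i) ^ 2 := by
    simp_rw [Finset.mul_sum]
    rw [Finset.sum_comm]
    refine Finset.sum_congr rfl fun i _ => ?_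
    have : ∑ k, w k * (c i * p i k) = c i * ∑ k, p i k * w k := by
      rw [Finset.mul_sum]; exact Finset.sum_congr rfl fun k _ => by ring
    rw [this]; rw [show (∑ k, p i k * w k) = c i from rfl, sq]
  have e2 : ∑ k, (∑ i, c i * p i k) ^ 2 = ∑ i, (c i) ^ 2 := by
    have h1 : ∀ k, (∑ i, c i * p i k) ^ 2 = ∑ i, ∑ j, (c i * c j) * (p i k * p j k) := by
      intro k
      rw [sq, Finset.sum_mul_sum]
      exact Finset.sum_congr rfl fun i _ => Finset.sum_congr rfl fun j _ => by ring
    simp_rw [h1]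
    rw [Finset.sum_comm]
    refine Finset.sum_congr rfl fun i _ => ?_
    rw [Finset.sum_comm]
    have h2 : ∀ j, ∑ k, (c i * c j) * (p i k * p j k) = if i = j then c i ^ 2 * ε i else 0 := by
      intro j
      rw [← Finset.mul_sum, hG i j]
      by_cases h : i = j
      · subst h; simp only [if_true]; ring
      · simp [h]
    simp_rw [h2]
    rw [Finset.sum_ite_eq univ i (fun j => c i ^ 2 * ε i)]
    simp only [mem_univ, if_true]
    rcases hε i with h | h
    · rw [h, hczero i h]; ring
    · rw [h, mul_one]
  have key : 0 ≤ ∑ k, (w k - ∑ i, c i * p i k) ^ 2 :=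
    Finset.sum_nonneg fun k _ => sq_nonneg _
  have expand : ∑ k, (w k - ∑ i, c i * p i k) ^ 2
      = ∑ k, (w k) ^ 2 - ∑ i, (c i) ^ 2 := by
    have : ∀ k, (w k - ∑ i, c i * p i k) ^ 2
        = (w k) ^ 2 - 2 * (w k * ∑ i, c i * p i k) + (∑ i, c i * p i k) ^ 2 := fun k => by ring
    simp_rw [this]
    rw [Finset.sum_add_distrib, Finset.sum_sub_distrib, ← Finset.mul_sum, e1, e2]
    ring
  rw [expand] at key
  linarith



open Finset Matrix in
lemma svd_exists {m n : ℕ} (hmn : m ≤ n) (X : Matrix (Fin m) (Fin n) ℝ) :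
    ∃ (p : Fin m → Fin m → ℝ) (q : Fin m → Fin n → ℝ),
      (∀ i j, ∑ k, q i k * q j k = if i = j then (1:ℝ) else 0) ∧
      (∀ i j, ∑ k, p i k * p j k =
        if i = j then (if singularValues hmn X i = 0 then (0:ℝ) else 1) else 0) ∧
      (∀ a k, X a k = ∑ i, singularValues hmn X i * (p i a * q i k)) := by
  classical
  set hA := Matrix.isHermitian_conjTranspose_mul_self X with hAdef
  set ev : Fin n → ℝ := hA.eigenvalues with hev
  set B := hA.eigenvectorBasis with hB
  set w : Fin n → Fin n → ℝ := fun j => ⇑(B j) with hw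
  -- orthonormality of w
  have worth : ∀ j l, ∑ k, w j k * w l k = if j = l then (1:ℝ) else 0 := by
    intro j l
    have := orthonormal_iff_ite.mp B.orthonormal j l
    rw [PiLp.inner_apply] at this
    simpa [hw, mul_comm] using this
  -- completeness of w
  have wcomp : ∀ k l, ∑ j, w j k * w j l = if k = l then (1:ℝ) else 0 := by
    intro k l
    have := B.sum_inner_mul_inner (EuclideanSpace.single k (1:ℝ)) (EuclideanSpace.single l (1:ℝ))
    simp only [EuclideanSpace.inner_single_left, EuclideanSpace.inner_single_right,
      starRingEnd_apply, star_trivial, one_mul, mul_one] at this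
    have h2 : (EuclideanSpace.single k (1:ℝ)) l = if k = l then (1:ℝ) else 0 := by
      simp [EuclideanSpace.single_apply, eq_comm]
    rw [h2] at this
    exact this
  have evnn : ∀ j, 0 ≤ ev j := fun j => Matrix.eigenvalues_conjTranspose_mul_self_nonneg X j
  -- key inner product identity
  have XwXw : ∀ j l, ∑ a, (X *ᵥ w j) a * (X *ᵥ w l) a = ev l * (if j = l then 1 else 0) := by
    intro j l
    have h1 : ∑ a, (X *ᵥ w j) a * (X *ᵥ w l) a = ∑ k, w j k * ((Xᴴ * X) *ᵥ w l) k := by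
      have e : ∀ k, ((Xᴴ * X) *ᵥ w l) k = ∑ a, X a k * (X *ᵥ w l) a := by
        intro k
        rw [← Matrix.mulVec_mulVec]
        simp [Matrix.mulVec, dotProduct, Matrix.conjTranspose_apply]
      simp_rw [e]
      have e2 : ∀ a, (X *ᵥ w j) a * (X *ᵥ w l) a = ∑ k, X a k * w j k * (X *ᵥ w l) a := by
        intro a
        rw [show (X *ᵥ w j) a = ∑ k, X a k * w j k from by
          simp [Matrix.mulVec, dotProduct], Finset.sum_mul]
      simp_rw [e2]
      rw [Finset.sum_comm]
      refine Finset.sum_congr rfl fun k _ => ?_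
      rw [Finset.mul_sum]
      refine Finset.sum_congr rfl fun a _ => by ring
    have h2 : (Xᴴ * X) *ᵥ w l = ev l • w l := hA.mulVec_eigenvectorBasis l
    rw [h1, h2]
    simp only [Pi.smul_apply, smul_eq_mul]
    have e3 : ∑ x, w j x * (ev l * w l x) = ev l * ∑ x, w j x * w l x := by
      rw [Finset.mul_sum]; exact Finset.sum_congr rfl fun x _ => by ring
    rw [e3, worth j l]
  set τ := Tuple.sort ev with hτ
  have mono : Monotone (ev ∘ τ) := Tuple.monotone_sort ev
  set ρ : Fin m → Fin n := fun i => τ (Fin.rev (Fin.castLE hmn i)) with hρ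
  have ρinj : Function.Injective ρ := fun i i' h => by
    have h1 := (Equiv.injective τ) h
    have h2 := Fin.rev_injective h1
    exact Fin.castLE_injective hmn h2
  have σdef : ∀ i, singularValues hmn X i = Real.sqrt (ev (ρ i)) := fun i => rfl
  have hσ0 : ∀ i, (singularValues hmn X i = 0 ↔ ev (ρ i) = 0) := by
    intro i
    rw [σdef i]
    exact Real.sqrt_eq_zero (evnn _)
  -- inner products in EuclideanSpace form
  set z : Fin n → EuclideanSpace ℝ (Fin m) :=
    fun j => (WithLp.equiv 2 (Fin m → ℝ)).symm (X *ᵥ w j) with hz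
  have hzapp : ∀ j a, z j a = (X *ᵥ w j) a := fun j a => rfl
  have hin : ∀ j l : Fin n, @inner ℝ _ _ (z j) (z l) = ev l * (if j = l then 1 else 0) := by
    intro j l
    rw [← XwXw j l]
    rw [PiLp.inner_apply]
    exact Finset.sum_congr rfl fun a _ => by
      rw [hzapp, hzapp]; simp [mul_comm]
  -- at most m nonzero eigenvalues
  have card_le : Fintype.card {j : Fin n // ev j ≠ 0} ≤ m := by
    set y : {j : Fin n // ev j ≠ 0} → EuclideanSpace ℝ (Fin m) :=
      fun j => (Real.sqrt (ev j))⁻¹ • z j with hy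
    have yo : Orthonormal ℝ y := by
      rw [orthonormal_iff_ite]
      intro j l
      rw [hy]
      simp only
      rw [real_inner_smul_left, real_inner_smul_right, hin j l]
      by_cases h : j = l
      · subst h
        have hpos : 0 < ev (j : Fin n) := (evnn _).lt_of_ne (Ne.symm j.2)
        have hs : Real.sqrt (ev (j : Fin n)) ≠ 0 := ne_of_gt (Real.sqrt_pos.mpr hpos)
        have hss : Real.sqrt (ev (j:Fin n)) * Real.sqrt (ev (j:Fin n)) = ev (j:Fin n) :=
          Real.mul_self_sqrt (evnn _)
        simp only [if_pos rfl]
        field_simp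
        rw [sq, hss]
      · have h' : (j : Fin n) ≠ (l : Fin n) := fun hc => h (Subtype.ext hc)
        rw [if_neg h', if_neg h]
        ring
    have li := yo.linearIndependent
    have hcard := li.fintype_card_le_finrank
    rwa [finrank_euclideanSpace, Fintype.card_fin] at hcard
  have zero_small : ∀ l : Fin n, (l : ℕ) < n - m → ev (τ l) = 0 := by
    intro l hl
    by_contra hne
    have hpos : 0 < ev (τ l) := (evnn _).lt_of_ne (Ne.symm hne)
    have hinj : Function.Injective (fun l' : Set.Ici l => (⟨τ l', by
        have h1 : ev (τ l) ≤ ev (τ l') := mono l'.2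
        exact ne_of_gt (lt_of_lt_of_le hpos h1)⟩ : {j : Fin n // ev j ≠ 0})) := by
      intro a b hab
      simp only [Subtype.mk.injEq] at hab
      exact Subtype.ext (τ.injective hab)
    have hcard := Fintype.card_le_of_injective _ hinj
    rw [Fintype.card_Ici, Fin.card_Ici] at hcard
    have := l.isLt
    omega
  have not_mem : ∀ j : Fin n, (∀ i : Fin m, ρ i ≠ j) → ev j = 0 := by
    intro j hj
    set l := τ.symm j with hl
    have hjl : τ l = j := τ.apply_symm_apply j
    rcases lt_or_ge (l : ℕ) (n - m) with h | h
    · rw [← hjl]; exact zero_small l h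
    · exfalso
      have hln := l.isLt
      refine hj ⟨n - 1 - (l : ℕ), by omega⟩ ?_
      show τ (Fin.rev (Fin.castLE hmn ⟨n - 1 - (l : ℕ), by omega⟩)) = j
      conv_rhs => rw [← hjl]
      congr 1
      apply Fin.ext
      simp only [Fin.val_rev, Fin.coe_castLE]
      omega
  have Xw0 : ∀ j, ev j = 0 → ∀ a, (X *ᵥ w j) a = 0 := by
    intro j h a
    have h0 : ∑ a, (X *ᵥ w j) a * (X *ᵥ w j) a = 0 := by rw [XwXw j j]; simp [h]
    have := (Finset.sum_eq_zero_iff_of_nonneg (fun a _ => mul_self_nonneg _)).1 h0 a (mem_univ a)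
    nlinarith [this]
  refine ⟨fun i a => if ev (ρ i) = 0 then 0 else (Real.sqrt (ev (ρ i)))⁻¹ * (X *ᵥ w (ρ i)) a,
    fun i k => w (ρ i) k, ?_, ?_, ?_⟩
  · intro i j
    rw [worth (ρ i) (ρ j)]
    by_cases h : i = j
    · subst h; simp
    · rw [if_neg (fun hc => h (ρinj hc)), if_neg h]
  · intro i j
    by_cases hi : ev (ρ i) = 0
    · simp only [if_pos hi, zero_mul, Finset.sum_const_zero]
      by_cases h : i = j
      · subst h
        rw [if_pos rfl, if_pos ((hσ0 i).mpr hi)]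
      · rw [if_neg h]
    · by_cases hj : ev (ρ j) = 0
      · simp only [if_pos hj, mul_zero, Finset.sum_const_zero]
        by_cases h : i = j
        · subst h; exact absurd hj hi
        · rw [if_neg h]
      · simp only [if_neg hi, if_neg hj]
        have e1 : ∑ k, (Real.sqrt (ev (ρ i)))⁻¹ * (X *ᵥ w (ρ i)) k *
            ((Real.sqrt (ev (ρ j)))⁻¹ * (X *ᵥ w (ρ j)) k)
            = (Real.sqrt (ev (ρ i)))⁻¹ * (Real.sqrt (ev (ρ j)))⁻¹ *
              ∑ k, (X *ᵥ w (ρ i)) k * (X *ᵥ w (ρ j)) k := by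
          rw [Finset.mul_sum]
          exact Finset.sum_congr rfl fun k _ => by ring
        rw [e1, XwXw (ρ i) (ρ j)]
        by_cases h : i = j
        · subst h
          rw [if_pos rfl, if_pos rfl, if_neg ((not_iff_not.mpr (hσ0 i)).mpr hi)]
          have hpos : 0 < ev (ρ i) := (evnn _).lt_of_ne (Ne.symm hi)
          have hs : Real.sqrt (ev (ρ i)) ≠ 0 := ne_of_gt (Real.sqrt_pos.mpr hpos)
          have hss : Real.sqrt (ev (ρ i)) * Real.sqrt (ev (ρ i)) = ev (ρ i) :=
            Real.mul_self_sqrt (evnn _)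
          field_simp
          rw [sq, hss]
        · rw [if_neg (fun hc => h (ρinj hc)), if_neg h]
          ring
  · intro a k
    have expand : X a k = ∑ j : Fin n, (X *ᵥ w j) a * w j k := by
      have e1 : ∀ j, (X *ᵥ w j) a * w j k = ∑ l, X a l * (w j l * w j k) := by
        intro j
        rw [show (X *ᵥ w j) a = ∑ l, X a l * w j l from by
          simp [Matrix.mulVec, dotProduct], Finset.sum_mul]
        exact Finset.sum_congr rfl fun l _ => by ring
      simp_rw [e1]
      rw [Finset.sum_comm]
      have e2 : ∀ l, ∑ j, X a l * (w j l * w j k) = X a l * (if l = k then 1 else 0) := by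
        intro l
        rw [← Finset.mul_sum, wcomp l k]
      simp_rw [e2]
      simp
    rw [expand]
    have e3 : ∑ j : Fin n, (X *ᵥ w j) a * w j k
        = ∑ j ∈ Finset.image ρ univ, (X *ᵥ w j) a * w j k := by
      refine (Finset.sum_subset (Finset.subset_univ _) (fun j _ hj => ?_)).symm
      have hz : ev j = 0 := not_mem j (fun i hi => hj (hi ▸ Finset.mem_image_of_mem ρ (mem_univ i)))
      rw [Xw0 j hz a, zero_mul]
    rw [e3, Finset.sum_image (fun i _ i' _ h => ρinj h)]
    refine Finset.sum_congr rfl fun i _ => ?_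
    by_cases h : ev (ρ i) = 0
    · simp [Xw0 _ h a, h]
    · simp only [if_neg h, σdef i]
      have hpos : 0 < ev (ρ i) := (evnn _).lt_of_ne (Ne.symm h)
      have hs : Real.sqrt (ev (ρ i)) ≠ 0 := ne_of_gt (Real.sqrt_pos.mpr hpos)
      field_simp

lemma sing_nonneg {m n : ℕ} (hmn : m ≤ n) (X : Matrix (Fin m) (Fin n) ℝ) (i : Fin m) :
    0 ≤ singularValues hmn X i := Real.sqrt_nonneg _

lemma sing_antitone {m n : ℕ} (hmn : m ≤ n) (X : Matrix (Fin m) (Fin n) ℝ) :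
    Antitone (singularValues hmn X) := by
  intro i j hij
  set ev : Fin n → ℝ := (Matrix.isHermitian_conjTranspose_mul_self X).eigenvalues with hev
  have mono : Monotone (ev ∘ Tuple.sort ev) := Tuple.monotone_sort ev
  apply Real.sqrt_le_sqrt
  apply mono
  rw [Fin.le_def]
  simp only [Fin.val_rev, Fin.coe_castLE]
  have := Fin.is_lt j
  have := Fin.is_lt i
  omega

open Finset in
/-- Rearrangement-type bound: a `[0,1]`-weighted sum of an antitone nonnegative sequence is at
most the sum of its first `k` terms. -/
lemma rearr {M : ℕ} (σ t : Fin M → ℝ) (hσa : Antitone σ) (hσn : ∀ j, 0 ≤ σ j)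
    (ht0 : ∀ j, 0 ≤ t j) (ht1 : ∀ j, t j ≤ 1) (k : ℕ) (hsum : ∑ j, t j ≤ k) :
    ∑ j, σ j * t j ≤ ∑ j : Fin M, (if (j : ℕ) < k then σ j else 0) := by
  set σs : ℝ := if h : k < M then σ ⟨k, h⟩ else 0 with hσs
  have hσs0 : 0 ≤ σs := by
    rw [hσs]
    split
    · exact hσn _
    · exact le_refl 0
  have key : ∀ j : Fin M, σ j * t j - (if (j : ℕ) < k then σ j else 0)
      ≤ σs * (t j - (if (j : ℕ) < k then 1 else 0)) := by
    intro j
    by_cases hj : (j : ℕ) < k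
    · rw [if_pos hj, if_pos hj]
      have h1 : σs ≤ σ j := by
        rw [hσs]
        split
        · next h => exact hσa (by rw [Fin.le_def]; exact le_of_lt hj)
        · exact hσn j
      nlinarith [ht1 j]
    · rw [if_neg hj, if_neg hj]
      have hkM : k < M := by
        rcases lt_or_ge k M with h | h
        · exact h
        · exact absurd (lt_of_lt_of_le j.isLt h) hj
      have h1 : σ j ≤ σs := by
        rw [hσs, dif_pos hkM]
        exact hσa (by simp only [Fin.le_def, Fin.val_mk]; omega)
      nlinarith [ht0 j]
  have hind : ∑ j : Fin M, (if (j : ℕ) < k then (1:ℝ) else 0) ≥ ∑ j, t j := by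
    rcases le_or_gt M k with h | h
    · have : ∀ j : Fin M, (if (j : ℕ) < k then (1:ℝ) else 0) = 1 := fun j =>
        if_pos (lt_of_lt_of_le j.isLt h)
      simp only [this]
      rw [Finset.sum_const, card_univ, Fintype.card_fin, nsmul_eq_mul, mul_one]
      calc ∑ j, t j ≤ ∑ j : Fin M, (1:ℝ) := Finset.sum_le_sum fun j _ => ht1 j
      _ = M := by rw [Finset.sum_const, card_univ, Fintype.card_fin, nsmul_eq_mul, mul_one]
    · calc ∑ j, t j ≤ (k:ℝ) := hsum
        _ = ∑ j : Fin M, (if (j : ℕ) < k then (1:ℝ) else 0) := by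
          rw [Finset.sum_boole]
          have hfe : (univ.filter (fun j : Fin M => (j:ℕ) < k)) = Finset.Iio ⟨k, h⟩ := by
            ext x
            simp [Fin.lt_def]
          rw [hfe, Fin.card_Iio]
  have total := Finset.sum_le_sum (fun j (_ : j ∈ univ) => key j)
  rw [← Finset.mul_sum] at total
  have hsplit : ∑ i : Fin M, (t i - if (i:ℕ) < k then (1:ℝ) else 0)
      = ∑ i : Fin M, t i - ∑ i : Fin M, (if (i:ℕ) < k then (1:ℝ) else 0) :=
    Finset.sum_sub_distrib _ _
  have hsplit2 : ∑ i : Fin M, (σ i * t i - if (i:ℕ) < k then σ i else 0)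
      = ∑ i : Fin M, σ i * t i - ∑ i : Fin M, (if (i:ℕ) < k then σ i else 0) :=
    Finset.sum_sub_distrib _ _
  rw [hsplit, hsplit2] at total
  nlinarith [total, hind, hσs0, mul_nonneg hσs0 (sub_nonneg.mpr hind)]

open Finset in
/-- Abel-summation comparison: if partial sums of `a` are dominated by those of `b`, then the
`s`-weighted sums compare, for `s` antitone and nonnegative. -/
lemma abel_sum (s a b : ℕ → ℝ) (hs : ∀ i j, i ≤ j → s j ≤ s i) (hsn : ∀ i, 0 ≤ s i) :
    ∀ M, (∀ k ≤ M, ∑ i ∈ Finset.range k, a i ≤ ∑ i ∈ Finset.range k, b i) →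
      ∑ i ∈ Finset.range M, s i * a i ≤ ∑ i ∈ Finset.range M, s i * b i := by
  intro M
  induction M generalizing s with
  | zero => intro _; simp
  | succ M ih =>
    intro hp
    set s' : ℕ → ℝ := fun i => max (s i - s M) 0 with hs'
    have hs'a : ∀ i j, i ≤ j → s' j ≤ s' i := fun i j hij =>
      max_le_max (by linarith [hs i j hij]) le_rfl
    have hs'n : ∀ i, 0 ≤ s' i := fun i => le_max_right _ _
    have hs'eq : ∀ i ≤ M, s' i = s i - s M := fun i hi =>
      max_eq_left (by linarith [hs i M hi])
    have ihs := ih s' hs'a hs'n (fun k hk => hp k (Nat.le_succ_of_le hk))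
    have hM := hp (M + 1) le_rfl
    have e1 : ∀ c : ℕ → ℝ, ∑ i ∈ Finset.range (M + 1), s i * c i
        = ∑ i ∈ Finset.range M, s' i * c i + s M * ∑ i ∈ Finset.range (M + 1), c i := by
      intro c
      have h0 : ∀ i ∈ Finset.range (M+1), s i * c i = s' i * c i + s M * c i := fun i hi => by
        rw [hs'eq i (Nat.lt_succ_iff.mp (Finset.mem_range.mp hi))]; ring
      rw [Finset.sum_congr rfl h0, Finset.sum_add_distrib, ← Finset.mul_sum,
        Finset.sum_range_succ (fun i => s' i * c i)]
      have hsM : s' M = 0 := by rw [hs'eq M le_rfl, sub_self]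
      rw [hsM, zero_mul, add_zero]
    rw [e1 a, e1 b]
    have h2 : s M * ∑ i ∈ Finset.range (M + 1), a i ≤ s M * ∑ i ∈ Finset.range (M + 1), b i :=
      mul_le_mul_of_nonneg_left hM (hsn M)
    linarith

open Finset in
/-- Frobenius-type expansion of a bi-orthogonal decomposition. -/
lemma frob_decomp {m n N : ℕ} (c : Fin N → ℝ) (p : Fin N → Fin m → ℝ) (q : Fin N → Fin n → ℝ)
    (ε : Fin N → ℝ)
    (hp : ∀ i j, ∑ a, p i a * p j a = if i = j then ε i else 0)
    (hq : ∀ i j, ∑ k, q i k * q j k = if i = j then (1:ℝ) else 0)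
    (hε : ∀ i, ε i = 0 ∨ ε i = 1) (hce : ∀ i, ε i = 0 → c i = 0) :
    ∑ a, ∑ k, (∑ i, c i * (p i a * q i k)) ^ 2 = ∑ i, (c i) ^ 2 := by
  have e1 : ∀ a k, (∑ i, c i * (p i a * q i k)) ^ 2
      = ∑ i, ∑ j, (c i * c j) * ((p i a * p j a) * (q i k * q j k)) := by
    intro a k
    rw [sq, Finset.sum_mul_sum]
    exact Finset.sum_congr rfl fun i _ => Finset.sum_congr rfl fun j _ => by ring
  simp_rw [e1]
  have swap1 : ∀ a : Fin m, ∑ k : Fin n, ∑ i : Fin N, ∑ j : Fin N,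
      (c i * c j) * ((p i a * p j a) * (q i k * q j k))
      = ∑ i : Fin N, ∑ k : Fin n, ∑ j : Fin N,
      (c i * c j) * ((p i a * p j a) * (q i k * q j k)) := fun a => Finset.sum_comm
  simp_rw [swap1]
  rw [Finset.sum_comm]
  have e2 : ∀ i, ∑ a, ∑ k, ∑ j, (c i * c j) * ((p i a * p j a) * (q i k * q j k))
      = (c i)^2 := by
    intro i
    have e3 : ∀ a, ∑ k, ∑ j, (c i * c j) * ((p i a * p j a) * (q i k * q j k))
        = ∑ j, (c i * c j) * (p i a * p j a) * (∑ k, q i k * q j k) := by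
      intro a
      rw [Finset.sum_comm]
      refine Finset.sum_congr rfl fun j _ => ?_
      rw [Finset.mul_sum]
      exact Finset.sum_congr rfl fun k _ => by ring
    simp_rw [e3]
    rw [Finset.sum_comm]
    have e4 : ∀ j, ∑ a, (c i * c j) * (p i a * p j a) * (∑ k, q i k * q j k)
        = (c i * c j) * (∑ a, p i a * p j a) * (∑ k, q i k * q j k) := by
      intro j
      rw [← Finset.sum_mul, ← Finset.mul_sum]
    simp_rw [e4, hp, hq]
    rw [Finset.sum_eq_single i]
    · rw [if_pos rfl, if_pos rfl]
      rcases hε i with h | h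
      · rw [hce i h, h]; ring
      · rw [h]; ring
    · intro j _ hji
      rw [if_neg (fun hc => hji hc.symm), if_neg (fun hc => hji hc.symm)]
      ring
    · intro h
      exact absurd (Finset.mem_univ i) h
  exact Finset.sum_congr rfl fun i _ => e2 i

open Finset in
lemma shuffle {m n N : ℕ} (c : Fin N → ℝ) (u : Fin N → Fin m → ℝ) (v : Fin N → Fin n → ℝ)
    (f : Fin m → ℝ) (g : Fin n → ℝ) :
    ∑ a, ∑ k, f a * (∑ i, c i * (u i a * v i k)) * g k
      = ∑ i, c i * ((∑ a, f a * u i a) * (∑ k, v i k * g k)) := by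
  have e1 : ∀ (a : Fin m) (k : Fin n), f a * (∑ i, c i * (u i a * v i k)) * g k
      = ∑ i, c i * ((f a * u i a) * (v i k * g k)) := by
    intro a k
    rw [Finset.mul_sum, Finset.sum_mul]
    exact Finset.sum_congr rfl fun i _ => by ring
  simp_rw [e1]
  have swap1 : ∀ a : Fin m, ∑ k : Fin n, ∑ i : Fin N, c i * ((f a * u i a) * (v i k * g k))
      = ∑ i : Fin N, ∑ k : Fin n, c i * ((f a * u i a) * (v i k * g k)) :=
    fun a => Finset.sum_comm
  simp_rw [swap1]
  rw [Finset.sum_comm]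
  refine Finset.sum_congr rfl fun i _ => ?_
  have e2 : ∀ a : Fin m, ∑ k, c i * ((f a * u i a) * (v i k * g k))
      = (c i * (f a * u i a)) * ∑ k, v i k * g k := by
    intro a
    rw [Finset.mul_sum]
    exact Finset.sum_congr rfl fun k _ => by ring
  simp_rw [e2]
  rw [← Finset.sum_mul, ← Finset.mul_sum]
  ring

open Finset in
lemma inner_decomp {m n N : ℕ} (c : Fin N → ℝ) (p : Fin N → Fin m → ℝ) (q : Fin N → Fin n → ℝ)
    (X : Matrix (Fin m) (Fin n) ℝ) :
    ∑ a, ∑ k, (∑ i, c i * (p i a * q i k)) * X a k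
      = ∑ i, c i * (∑ a, ∑ k, p i a * X a k * q i k) := by
  have e1 : ∀ (a : Fin m) (k : Fin n), (∑ i, c i * (p i a * q i k)) * X a k
      = ∑ i, c i * (p i a * X a k * q i k) := by
    intro a k
    rw [Finset.sum_mul]
    exact Finset.sum_congr rfl fun i _ => by ring
  simp_rw [e1]
  have swap1 : ∀ a : Fin m, ∑ k : Fin n, ∑ i : Fin N, c i * (p i a * X a k * q i k)
      = ∑ i : Fin N, ∑ k : Fin n, c i * (p i a * X a k * q i k) := fun a => Finset.sum_comm
  simp_rw [swap1]
  rw [Finset.sum_comm]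
  refine Finset.sum_congr rfl fun i _ => ?_
  rw [Finset.mul_sum]
  refine Finset.sum_congr rfl fun a _ => ?_
  rw [Finset.mul_sum]

open Finset in
/-- `pᵀ A q` for a bi-orthogonally decomposed `A`. -/
lemma pAq_decomp {m n N : ℕ} (c : Fin N → ℝ) (p : Fin N → Fin m → ℝ) (q : Fin N → Fin n → ℝ)
    (ε : Fin N → ℝ)
    (hp : ∀ i j, ∑ a, p i a * p j a = if i = j then ε i else 0)
    (hq : ∀ i j, ∑ k, q i k * q j k = if i = j then (1:ℝ) else 0) (j : Fin N) :
    ∑ a, ∑ k, p j a * (∑ i, c i * (p i a * q i k)) * q j k = c j * ε j := by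
  rw [shuffle]
  rw [Finset.sum_eq_single j]
  · have h1 : ∑ a, p j a * p j a = ε j := by rw [hp j j, if_pos rfl]
    have h2 : ∑ k, q j k * q j k = 1 := by rw [hq j j, if_pos rfl]
    rw [h1, h2]
    ring
  · intro i _ hij
    have h1 : ∑ a, p j a * p i a = 0 := by rw [hp j i, if_neg (fun hc => hij hc.symm)]
    rw [h1]
    ring
  · intro h
    exact absurd (Finset.mem_univ j) h

open Finset in
/-- Ky Fan-type inequality: sums of `uᵢᵀ X vᵢ` over the first `k` indices are bounded by the sum
of the `k` largest singular values. -/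
lemma kyfan {m n : ℕ} (hmn : m ≤ n) (X : Matrix (Fin m) (Fin n) ℝ)
    (u : Fin m → Fin m → ℝ) (v : Fin m → Fin n → ℝ)
    (hu : ∀ i j, ∑ k, u i k * u j k = if i = j then (1:ℝ) else 0)
    (hv : ∀ i j, ∑ k, v i k * v j k = if i = j then (1:ℝ) else 0)
    (k : ℕ) :
    ∑ i : Fin m, (if (i : ℕ) < k then ∑ a, ∑ b, u i a * X a b * v i b else 0)
      ≤ ∑ i : Fin m, (if (i : ℕ) < k then singularValues hmn X i else 0) := by
  obtain ⟨p, q, hq, hp, hX⟩ := svd_exists hmn X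
  set σ : Fin m → ℝ := singularValues hmn X with hσ
  set ε : Fin m → ℝ := fun i => if σ i = 0 then 0 else 1 with hε
  have hεd : ∀ i, ε i = 0 ∨ ε i = 1 := fun i => by
    rw [hε]
    by_cases h : σ i = 0
    · exact Or.inl (by simp [h])
    · exact Or.inr (by simp [h])
  have ha : ∀ i : Fin m, ∑ a, ∑ b, u i a * X a b * v i b
      = ∑ j, σ j * ((∑ a, u i a * p j a) * (∑ b, v i b * q j b)) := by
    intro i
    have : ∀ (a : Fin m) (b : Fin n), u i a * X a b * v i b
        = u i a * (∑ j, σ j * (p j a * q j b)) * v i b := by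
      intro a b
      rw [← hX a b]
    simp_rw [this]
    rw [shuffle]
    refine Finset.sum_congr rfl fun j _ => ?_
    congr 1
    congr 1
    exact Finset.sum_congr rfl fun b _ => by ring
  -- weights
  set d : Fin m → ℝ := fun j =>
    ∑ i : Fin m, (if (i : ℕ) < k then (∑ a, u i a * p j a) * (∑ b, v i b * q j b) else 0) with hd
  set t : Fin m → ℝ := fun j => max (d j) 0 with ht
  -- Bessel bounds (directions)
  have hbU : ∀ (i : Fin m) (j : Fin m), True := fun _ _ => trivial
  have hBp : ∀ j : Fin m, ∑ a, (p j a)^2 ≤ 1 := by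
    intro j
    have h1 : ∑ a, p j a * p j a = ε j := by rw [hp j j, if_pos rfl]
    calc ∑ a, (p j a)^2 = ε j := by rw [← h1]; exact Finset.sum_congr rfl fun a _ => by ring
      _ ≤ 1 := by
        rcases hεd j with h | h
        · rw [h]; norm_num
        · rw [h]
  have hBq : ∀ j : Fin m, ∑ b, (q j b)^2 = 1 := by
    intro j
    have h1 : ∑ b, q j b * q j b = 1 := by rw [hq j j, if_pos rfl]
    rw [← h1]
    exact Finset.sum_congr rfl fun b _ => by ring
  have hσn : ∀ j, 0 ≤ σ j := fun j => sing_nonneg hmn X j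
  have hσa : Antitone σ := sing_antitone hmn X
  set bU : Fin m → Fin m → ℝ := fun i j => ∑ a, u i a * p j a with hbUdef
  set cV : Fin m → Fin m → ℝ := fun i j => ∑ b, v i b * q j b with hcVdef
  have hu2 : ∀ i : Fin m, ∑ a, (u i a)^2 = 1 := by
    intro i
    have h1 : ∑ a, u i a * u i a = 1 := by rw [hu i i, if_pos rfl]
    rw [← h1]; exact Finset.sum_congr rfl fun a _ => by ring
  have hv2 : ∀ i : Fin m, ∑ b, (v i b)^2 = 1 := by
    intro i
    have h1 : ∑ b, v i b * v i b = 1 := by rw [hv i i, if_pos rfl]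
    rw [← h1]; exact Finset.sum_congr rfl fun b _ => by ring
  -- Bessel over the index i (families u, v)
  have BU : ∀ j : Fin m, ∑ i, (bU i j)^2 ≤ 1 := by
    intro j
    calc ∑ i, (bU i j)^2 ≤ ∑ a, (p j a)^2 :=
          bessel_aux u (fun _ => 1) (fun i i' => by rw [hu i i']) (fun _ => Or.inr rfl) (p j)
      _ ≤ 1 := hBp j
  have CV : ∀ j : Fin m, ∑ i, (cV i j)^2 ≤ 1 := by
    intro j
    calc ∑ i, (cV i j)^2 ≤ ∑ b, (q j b)^2 :=
          bessel_aux v (fun _ => 1) (fun i i' => by rw [hv i i']) (fun _ => Or.inr rfl) (q j)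
      _ = 1 := hBq j
  -- Bessel over the index j (families p, q)
  have BP : ∀ i : Fin m, ∑ j, (bU i j)^2 ≤ 1 := by
    intro i
    have h1 : ∑ j, (∑ a, p j a * u i a)^2 ≤ ∑ a, (u i a)^2 :=
      bessel_aux p ε (fun j j' => by rw [hp j j']) hεd (u i)
    have h2 : ∀ j : Fin m, (∑ a, p j a * u i a) = bU i j := fun j =>
      Finset.sum_congr rfl fun a _ => by ring
    simp_rw [h2] at h1
    rw [hu2 i] at h1
    exact h1
  have CQ : ∀ i : Fin m, ∑ j, (cV i j)^2 ≤ 1 := by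
    intro i
    have h1 : ∑ j, (∑ b, q j b * v i b)^2 ≤ ∑ b, (v i b)^2 :=
      bessel_aux q (fun _ => 1) (fun j j' => by rw [hq j j']) (fun _ => Or.inr rfl) (v i)
    have h2 : ∀ j : Fin m, (∑ b, q j b * v i b) = cV i j := fun j =>
      Finset.sum_congr rfl fun b _ => by ring
    simp_rw [h2] at h1
    rw [hv2 i] at h1
    exact h1
  have hd1 : ∀ j, d j ≤ 1 := by
    intro j
    have step : d j ≤ ∑ i, ((bU i j)^2 + (cV i j)^2)/2 := by
      refine Finset.sum_le_sum fun i _ => ?_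
      by_cases h : (i : ℕ) < k
      · rw [if_pos h]; nlinarith [sq_nonneg (bU i j - cV i j)]
      · rw [if_neg h]; positivity
    calc d j ≤ ∑ i, ((bU i j)^2 + (cV i j)^2)/2 := step
      _ = (∑ i, (bU i j)^2 + ∑ i, (cV i j)^2)/2 := by
          rw [← Finset.sum_add_distrib, ← Finset.sum_div]
      _ ≤ (1 + 1)/2 := by linarith [BU j, CV j]
      _ = 1 := by norm_num
  have ht0 : ∀ j, 0 ≤ t j := fun j => le_max_right _ _
  have ht1 : ∀ j, t j ≤ 1 := fun j => max_le (hd1 j) zero_le_one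
  have hts : ∑ j, t j ≤ (k : ℝ) := by
    have step : ∀ j, t j ≤ ∑ i : Fin m, (if (i : ℕ) < k then ((bU i j)^2 + (cV i j)^2)/2 else 0) := by
      intro j
      refine max_le ?_ (Finset.sum_nonneg fun i _ => by positivity)
      refine Finset.sum_le_sum fun i _ => ?_
      by_cases h : (i : ℕ) < k
      · rw [if_pos h, if_pos h]; nlinarith [sq_nonneg (bU i j - cV i j)]
      · rw [if_neg h, if_neg h]
    calc ∑ j, t j ≤ ∑ j, ∑ i : Fin m, (if (i : ℕ) < k then ((bU i j)^2 + (cV i j)^2)/2 else 0) :=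
          Finset.sum_le_sum fun j _ => step j
      _ = ∑ i : Fin m, ∑ j, (if (i : ℕ) < k then ((bU i j)^2 + (cV i j)^2)/2 else 0) :=
          Finset.sum_comm
      _ ≤ ∑ i : Fin m, (if (i : ℕ) < k then (1:ℝ) else 0) := by
          refine Finset.sum_le_sum fun i _ => ?_
          by_cases h : (i : ℕ) < k
          · simp only [if_pos h]
            have e : ∑ j, ((bU i j)^2 + (cV i j)^2)/2
                = (∑ j, (bU i j)^2 + ∑ j, (cV i j)^2)/2 := by
              rw [← Finset.sum_add_distrib, ← Finset.sum_div]
            rw [e]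
            linarith [BP i, CQ i]
          · simp only [if_neg h, Finset.sum_const_zero]
            exact le_refl 0
      _ ≤ (k : ℝ) := by
          rw [Finset.sum_boole]
          have hcard : (Finset.univ.filter (fun i : Fin m => (i : ℕ) < k)).card
              ≤ (Finset.range k).card := by
            apply Finset.card_le_card_of_injOn (fun i : Fin m => (i : ℕ))
            · intro x hx
              rw [Finset.mem_coe, Finset.mem_range]
              exact (Finset.mem_filter.mp hx).2
            · intro x _ y _ h
              exact Fin.ext h
          rw [Finset.card_range] at hcard
          exact_mod_cast hcard
  have lhs_eq : ∑ i : Fin m, (if (i : ℕ) < k then ∑ a, ∑ b, u i a * X a b * v i b else 0)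
      = ∑ j, σ j * d j := by
    have e1 : ∀ i : Fin m, (if (i : ℕ) < k then ∑ a, ∑ b, u i a * X a b * v i b else 0)
        = ∑ j, (if (i : ℕ) < k then σ j * (bU i j * cV i j) else 0) := by
      intro i
      by_cases h : (i : ℕ) < k
      · simp only [if_pos h]
        rw [ha i]
      · simp only [if_neg h, Finset.sum_const_zero]
    simp_rw [e1]
    rw [Finset.sum_comm]
    refine Finset.sum_congr rfl fun j _ => ?_
    show (∑ i : Fin m, if (i : ℕ) < k then σ j * (bU i j * cV i j) else 0)
        = σ j * ∑ i : Fin m, (if (i : ℕ) < k then bU i j * cV i j else 0)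
    rw [Finset.mul_sum]
    refine Finset.sum_congr rfl fun i _ => ?_
    by_cases h : (i : ℕ) < k
    · rw [if_pos h, if_pos h]
    · rw [if_neg h, if_neg h]; ring
  rw [lhs_eq]
  calc ∑ j, σ j * d j ≤ ∑ j, σ j * t j :=
        Finset.sum_le_sum fun j _ => mul_le_mul_of_nonneg_left (le_max_left _ _) (hσn j)
    _ ≤ ∑ j : Fin m, (if (j : ℕ) < k then σ j else 0) := rearr σ t hσa hσn ht0 ht1 k hts


open Finset in
lemma frob_sub {m n : ℕ} (A B : Matrix (Fin m) (Fin n) ℝ) :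
    frobSq (A - B) = frobSq A - 2 * (∑ a, ∑ k, A a k * B a k) + frobSq B := by
  unfold frobSq
  have e1 : ∀ (a : Fin m) (k : Fin n), ((A - B) a k)^2
      = (A a k)^2 - 2 * (A a k * B a k) + (B a k)^2 := by
    intro a k
    rw [Matrix.sub_apply]
    ring
  simp_rw [e1]
  have h1 : ∀ a : Fin m, ∑ k : Fin n, ((A a k)^2 - 2 * (A a k * B a k) + (B a k)^2)
      = ∑ k, (A a k)^2 - 2 * ∑ k, (A a k * B a k) + ∑ k, (B a k)^2 := by
    intro a
    rw [Finset.sum_add_distrib, Finset.sum_sub_distrib, Finset.mul_sum]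
  simp_rw [h1]
  rw [Finset.sum_add_distrib, Finset.sum_sub_distrib, Finset.mul_sum]

open Finset in
/-- Nuclear norm bound: if `A = Σ cᵢ uᵢvᵢᵀ` with orthonormal families and `cᵢ ≥ 0`, the sum of all
singular values of `A` is at most `Σ cᵢ`. -/
lemma nuclear_le {m n : ℕ} (hmn : m ≤ n) (A : Matrix (Fin m) (Fin n) ℝ)
    (c : Fin m → ℝ) (u : Fin m → Fin m → ℝ) (v : Fin m → Fin n → ℝ)
    (hu : ∀ i j, ∑ k, u i k * u j k = if i = j then (1:ℝ) else 0)
    (hv : ∀ i j, ∑ k, v i k * v j k = if i = j then (1:ℝ) else 0)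
    (hc : ∀ i, 0 ≤ c i)
    (hA : ∀ a k, A a k = ∑ i, c i * (u i a * v i k)) :
    ∑ j, singularValues hmn A j ≤ ∑ i, c i := by
  obtain ⟨p, q, hqg, hpg, hAX⟩ := svd_exists hmn A
  set σ : Fin m → ℝ := singularValues hmn A with hσ
  set ε : Fin m → ℝ := fun i => if σ i = 0 then 0 else 1 with hε
  have hεd : ∀ i, ε i = 0 ∨ ε i = 1 := fun i => by
    by_cases h : σ i = 0
    · exact Or.inl (by simp [hε, h])
    · exact Or.inr (by simp [hε, h])
  have hσj : ∀ j, σ j = ∑ a, ∑ k, p j a * A a k * q j k := by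
    intro j
    have hd := pAq_decomp σ p q ε hpg hqg j
    have e : ∀ (a : Fin m) (k : Fin n), p j a * A a k * q j k
        = p j a * (∑ i, σ i * (p i a * q i k)) * q j k := by
      intro a k
      rw [← hAX a k]
    simp_rw [e]
    rw [hd]
    by_cases h : σ j = 0
    · rw [h, hε]; simp [h]
    · rw [hε]; simp [h]
  have cross : ∀ j, ∑ a, ∑ k, p j a * A a k * q j k
      = ∑ i, c i * ((∑ a, p j a * u i a) * (∑ k, v i k * q j k)) := by
    intro j
    have e : ∀ (a : Fin m) (k : Fin n), p j a * A a k * q j k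
        = p j a * (∑ i, c i * (u i a * v i k)) * q j k := by
      intro a k
      rw [← hA a k]
    simp_rw [e]
    exact shuffle c u v (p j) (q j)
  have per_i : ∀ (i j : Fin m), True := fun _ _ => trivial
  -- bound the inner factor by 1
  have hq2 : ∀ j : Fin m, ∑ b, (q j b)^2 = 1 := by
    intro j
    have h1 : ∑ b, q j b * q j b = 1 := by rw [hqg j j, if_pos rfl]
    rw [← h1]; exact Finset.sum_congr rfl fun b _ => by ring
  have hv2 : ∀ i : Fin m, ∑ b, (v i b)^2 = 1 := by
    intro i
    have h1 : ∑ b, v i b * v i b = 1 := by rw [hv i i, if_pos rfl]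
    rw [← h1]; exact Finset.sum_congr rfl fun b _ => by ring
  have hu2 : ∀ i : Fin m, ∑ a, (u i a)^2 = 1 := by
    intro i
    have h1 : ∑ a, u i a * u i a = 1 := by rw [hu i i, if_pos rfl]
    rw [← h1]; exact Finset.sum_congr rfl fun a _ => by ring
  have gbound : ∀ i : Fin m,
      ∑ j, (∑ a, p j a * u i a) * (∑ k, v i k * q j k) ≤ 1 := by
    intro i
    have hb : ∑ j, (∑ a, p j a * u i a)^2 ≤ 1 := by
      calc ∑ j, (∑ a, p j a * u i a)^2 ≤ ∑ a, (u i a)^2 :=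
            bessel_aux p ε (fun j j' => by rw [hpg j j']) hεd (u i)
        _ = 1 := hu2 i
    have he : ∑ j, (∑ k, v i k * q j k)^2 ≤ 1 := by
      have h1 : ∑ j, (∑ k, q j k * v i k)^2 ≤ ∑ k, (v i k)^2 :=
        bessel_aux q (fun _ => 1) (fun j j' => by rw [hqg j j']) (fun _ => Or.inr rfl) (v i)
      have h2 : ∀ j : Fin m, (∑ k, q j k * v i k) = ∑ k, v i k * q j k := fun j =>
        Finset.sum_congr rfl fun k _ => by ring
      simp_rw [h2] at h1
      rw [hv2 i] at h1
      exact h1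
    have cs := Finset.sum_mul_sq_le_sq_mul_sq Finset.univ
      (fun j : Fin m => ∑ a, p j a * u i a) (fun j : Fin m => ∑ k, v i k * q j k)
    have hnn1 : (0:ℝ) ≤ ∑ j, (∑ a, p j a * u i a)^2 := Finset.sum_nonneg fun j _ => sq_nonneg _
    have hnn2 : (0:ℝ) ≤ ∑ j, (∑ k, v i k * q j k)^2 := Finset.sum_nonneg fun j _ => sq_nonneg _
    nlinarith [cs, hb, he, hnn1, hnn2]
  calc ∑ j, σ j = ∑ j, ∑ i, c i * ((∑ a, p j a * u i a) * (∑ k, v i k * q j k)) := by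
        refine Finset.sum_congr rfl fun j _ => ?_
        rw [hσj j, cross j]
    _ = ∑ i, c i * (∑ j, (∑ a, p j a * u i a) * (∑ k, v i k * q j k)) := by
        rw [Finset.sum_comm]
        exact Finset.sum_congr rfl fun i _ => by rw [Finset.mul_sum]
    _ ≤ ∑ i, c i * 1 := Finset.sum_le_sum fun i _ =>
        mul_le_mul_of_nonneg_left (gbound i) (hc i)
    _ = ∑ i, c i := by simp

open Finset in
lemma fin_sum_eq_range {m : ℕ} (A : Fin m → ℝ) :
    ∑ i : Fin m, A i = ∑ i ∈ Finset.range m, (if h : i < m then A ⟨i, h⟩ else 0) := by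
  rw [← Fin.sum_univ_eq_sum_range (fun i => if h : i < m then A ⟨i, h⟩ else 0) m]
  refine Finset.sum_congr rfl fun i _ => ?_
  rw [dif_pos i.isLt]

open Finset in
lemma if_sum_eq_range {m : ℕ} (A : Fin m → ℝ) (k : ℕ) (hk : k ≤ m) :
    ∑ i : Fin m, (if (i : ℕ) < k then A i else 0)
      = ∑ i ∈ Finset.range k, (if h : i < m then A ⟨i, h⟩ else 0) := by
  have e1 : ∑ i : Fin m, (if (i : ℕ) < k then A i else 0)
      = ∑ i ∈ Finset.range m, (if i < k then (if h : i < m then A ⟨i, h⟩ else 0) else 0) := by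
    rw [← Fin.sum_univ_eq_sum_range
      (fun i => if i < k then (if h : i < m then A ⟨i, h⟩ else 0) else 0) m]
    refine Finset.sum_congr rfl fun i _ => ?_
    by_cases h : (i : ℕ) < k
    · rw [if_pos h, if_pos h, dif_pos i.isLt]
    · rw [if_neg h, if_neg h]
  rw [e1]
  rw [← Finset.sum_subset (Finset.range_subset_range.mpr hk)]
  · refine Finset.sum_congr rfl fun i hi => ?_
    rw [if_pos (Finset.mem_range.mp hi)]
  · intro i _ hik
    rw [if_neg (fun hc => hik (Finset.mem_range.mpr hc))]

/-- If `Y = Σᵢ σ_{Y,i} uᵢvᵢᵀ` is an SVD of `Y`, `λ > 0`, and `r < m`, then the partial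
singular value thresholding
`PSVT_{r,λ}(Y) = Σ_{i≤r} σ_{Y,i} uᵢvᵢᵀ + Σ_{i>r} max(σ_{Y,i} − λ, 0) uᵢvᵢᵀ`
is a global minimizer of the truncated nuclear norm problem
`min_X ‖X‖_r + (1/(2λ))‖Y − X‖_F²`, where `‖X‖_r = Σ_{i>r} σ_{X,i}`. -/
theorem psvt_minimizes_truncated_nuclear_norm_problem {m n : ℕ} (hmn : m ≤ n)
    (u : Fin m → Fin m → ℝ) (v : Fin m → Fin n → ℝ)
    (hu : ∀ i j, ∑ k, u i k * u j k = if i = j then (1 : ℝ) else 0)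
    (hv : ∀ i j, ∑ k, v i k * v j k = if i = j then (1 : ℝ) else 0)
    (σY : Fin m → ℝ) (hord : Antitone σY) (hnn : ∀ i, 0 ≤ σY i)
    (Y : Matrix (Fin m) (Fin n) ℝ)
    (hY : Y = Matrix.of fun j k => ∑ i, σY i * (u i j * v i k))
    (lam : ℝ) (hlam : 0 < lam) (r : ℕ) (hr : r < m)
    (Xhat : Matrix (Fin m) (Fin n) ℝ)
    (hXhat : Xhat = Matrix.of fun j k =>
      ∑ i : Fin m, (if (i : ℕ) < r then σY i else max (σY i - lam) 0) * (u i j * v i k)) :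
    ∀ X : Matrix (Fin m) (Fin n) ℝ,
      (∑ i : Fin m, if r ≤ (i : ℕ) then singularValues hmn Xhat i else 0)
          + (1 / (2 * lam)) * frobSq (Y - Xhat)
        ≤ (∑ i : Fin m, if r ≤ (i : ℕ) then singularValues hmn X i else 0)
          + (1 / (2 * lam)) * frobSq (Y - X) := by
  intro X
  classical
  set σX : Fin m → ℝ := singularValues hmn X with hσXd
  set σH : Fin m → ℝ := singularValues hmn Xhat with hσHd
  set c : Fin m → ℝ := fun i => if (i : ℕ) < r then σY i else max (σY i - lam) 0 with hcdef
  have hcnn : ∀ i, 0 ≤ c i := by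
    intro i
    rw [hcdef]
    dsimp only
    split
    · exact hnn i
    · exact le_max_right _ _
  have hY_eq : ∀ a k, Y a k = ∑ i, σY i * (u i a * v i k) := by
    intro a k; rw [hY]; rfl
  have hXh_eq : ∀ a k, Xhat a k = ∑ i, c i * (u i a * v i k) := by
    intro a k; rw [hXhat]; rfl
  have hYXh : ∀ a k, (Y - Xhat) a k = ∑ i, (σY i - c i) * (u i a * v i k) := by
    intro a k
    rw [Matrix.sub_apply, hY_eq, hXh_eq, ← Finset.sum_sub_distrib]
    exact Finset.sum_congr rfl fun i _ => by ring
  have honed : ∀ _i : Fin m, (1 : ℝ) = 0 ∨ (1 : ℝ) = 1 := fun _ => Or.inr rfl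
  -- Frobenius norms via decompositions
  have F1 : frobSq (Y - Xhat) = ∑ i, (σY i - c i) ^ 2 := by
    have hfd := frob_decomp (fun i => σY i - c i) u v (fun _ => 1)
      (fun i j => by rw [hu i j]) hv honed (fun i h => absurd h one_ne_zero)
    unfold frobSq
    rw [← hfd]
    exact Finset.sum_congr rfl fun a _ => Finset.sum_congr rfl fun k _ => by rw [hYXh a k]
  have FY : frobSq Y = ∑ i, (σY i) ^ 2 := by
    have hfd := frob_decomp σY u v (fun _ => 1)
      (fun i j => by rw [hu i j]) hv honed (fun i h => absurd h one_ne_zero)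
    unfold frobSq
    rw [← hfd]
    exact Finset.sum_congr rfl fun a _ => Finset.sum_congr rfl fun k _ => by rw [hY_eq a k]
  obtain ⟨pX, qX, hqX, hpX, hXd⟩ := svd_exists hmn X
  have FX : frobSq X = ∑ i, (σX i) ^ 2 := by
    have hεd : ∀ i : Fin m, (if σX i = 0 then (0:ℝ) else 1) = 0
        ∨ (if σX i = 0 then (0:ℝ) else 1) = 1 := by
      intro i
      by_cases h : σX i = 0
      · exact Or.inl (if_pos h)
      · exact Or.inr (if_neg h)
    have hce : ∀ i : Fin m, (if σX i = 0 then (0:ℝ) else 1) = 0 → σX i = 0 := by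
      intro i h
      by_cases hh : σX i = 0
      · exact hh
      · rw [if_neg hh] at h; exact absurd h one_ne_zero
    have hfd := frob_decomp σX pX qX (fun i => if σX i = 0 then 0 else 1) hpX hqX hεd hce
    unfold frobSq
    rw [← hfd]
    exact Finset.sum_congr rfl fun a _ => Finset.sum_congr rfl fun k _ => by rw [hXd a k]
  -- inner product of Y and X
  set aX : Fin m → ℝ := fun i => ∑ a, ∑ k, u i a * X a k * v i k with haXd
  have hinner : ∑ a, ∑ k, Y a k * X a k = ∑ i, σY i * aX i := by
    have hid := inner_decomp σY u v X
    rw [← hid]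
    exact Finset.sum_congr rfl fun a _ => Finset.sum_congr rfl fun k _ => by rw [hY_eq a k]
  -- Abel summation: weighted Ky Fan
  set sext : ℕ → ℝ := fun i => if h : i < m then σY ⟨i, h⟩ else 0 with hsext
  set aext : ℕ → ℝ := fun i => if h : i < m then aX ⟨i, h⟩ else 0 with haext
  set bext : ℕ → ℝ := fun i => if h : i < m then σX ⟨i, h⟩ else 0 with hbext
  have hsmono : ∀ i j, i ≤ j → sext j ≤ sext i := by
    intro i j hij
    rw [hsext]
    dsimp only
    by_cases hj : j < m
    · have hi : i < m := lt_of_le_of_lt hij hj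
      rw [dif_pos hj, dif_pos hi]
      exact hord (show (⟨i, hi⟩ : Fin m) ≤ ⟨j, hj⟩ from hij)
    · rw [dif_neg hj]
      by_cases hi : i < m
      · rw [dif_pos hi]; exact hnn _
      · rw [dif_neg hi]
  have hsnn : ∀ i, 0 ≤ sext i := by
    intro i
    rw [hsext]
    dsimp only
    by_cases hi : i < m
    · rw [dif_pos hi]; exact hnn _
    · rw [dif_neg hi]
  have hpart : ∀ k ≤ m, ∑ i ∈ Finset.range k, aext i ≤ ∑ i ∈ Finset.range k, bext i := by
    intro k hk
    rw [← if_sum_eq_range aX k hk, ← if_sum_eq_range σX k hk]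
    exact kyfan hmn X u v hu hv k
  have habel := abel_sum sext aext bext hsmono hsnn m hpart
  have hLa : ∑ i ∈ Finset.range m, sext i * aext i = ∑ i, σY i * aX i := by
    rw [fin_sum_eq_range (fun i => σY i * aX i)]
    refine Finset.sum_congr rfl fun i hi => ?_
    have him : i < m := Finset.mem_range.mp hi
    rw [hsext, haext]
    dsimp only
    rw [dif_pos him, dif_pos him, dif_pos him]
  have hLb : ∑ i ∈ Finset.range m, sext i * bext i = ∑ i, σY i * σX i := by
    rw [fin_sum_eq_range (fun i => σY i * σX i)]
    refine Finset.sum_congr rfl fun i hi => ?_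
    have him : i < m := Finset.mem_range.mp hi
    rw [hsext, hbext]
    dsimp only
    rw [dif_pos him, dif_pos him, dif_pos him]
  have F4 : ∑ i, σY i * aX i ≤ ∑ i, σY i * σX i := by
    rw [← hLa, ← hLb]; exact habel
  -- lower bound on frobSq (Y - X)
  have hexp : ∑ i, (σY i - σX i) ^ 2
      = ∑ i, (σY i) ^ 2 - 2 * ∑ i, (σY i * σX i) + ∑ i, (σX i) ^ 2 := by
    have e : ∀ i : Fin m, (σY i - σX i) ^ 2
        = (σY i) ^ 2 - 2 * (σY i * σX i) + (σX i) ^ 2 := fun i => by ring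
    simp_rw [e]
    rw [Finset.sum_add_distrib, Finset.sum_sub_distrib, Finset.mul_sum]
  have F3 : ∑ i, (σY i - σX i) ^ 2 ≤ frobSq (Y - X) := by
    rw [frob_sub Y X, FY, FX, hinner, hexp]
    linarith [F4]
  -- bound on the truncated nuclear norm of Xhat
  have split_if : ∀ A : Fin m → ℝ, ∑ i : Fin m, (if r ≤ (i : ℕ) then A i else 0)
      = ∑ i, A i - ∑ i : Fin m, (if (i : ℕ) < r then A i else 0) := by
    intro A
    rw [← Finset.sum_sub_distrib]
    refine Finset.sum_congr rfl fun i _ => ?_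
    by_cases h : (i : ℕ) < r
    · rw [if_neg (by omega), if_pos h]; ring
    · rw [if_pos (le_of_not_gt h), if_neg h]; ring
  have hnuc : ∑ j, σH j ≤ ∑ i, c i := nuclear_le hmn Xhat c u v hu hv hcnn hXh_eq
  have huv : ∀ i : Fin m, ∑ a, ∑ k, u i a * Xhat a k * v i k = c i := by
    intro i
    have hd := pAq_decomp c u v (fun _ => 1) (fun i j => by rw [hu i j]) hv i
    have e : ∀ (a : Fin m) (k : Fin n), u i a * Xhat a k * v i k
        = u i a * (∑ i', c i' * (u i' a * v i' k)) * v i k := by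
      intro a k
      rw [← hXh_eq]
    simp_rw [e]
    simpa using hd
  have hkf : ∑ i : Fin m, (if (i : ℕ) < r then c i else 0)
      ≤ ∑ i : Fin m, (if (i : ℕ) < r then σH i else 0) := by
    have hk := kyfan hmn Xhat u v hu hv r
    have e : ∑ i : Fin m, (if (i : ℕ) < r then ∑ a, ∑ b, u i a * Xhat a b * v i b else 0)
        = ∑ i : Fin m, (if (i : ℕ) < r then c i else 0) := by
      refine Finset.sum_congr rfl fun i _ => ?_
      by_cases h : (i : ℕ) < r
      · rw [if_pos h, if_pos h, huv i]
      · rw [if_neg h, if_neg h]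
    rw [e] at hk
    exact hk
  have T1H : ∑ i : Fin m, (if r ≤ (i : ℕ) then σH i else 0)
      ≤ ∑ i : Fin m, (if r ≤ (i : ℕ) then c i else 0) := by
    rw [split_if σH, split_if c]
    linarith [hnuc, hkf]
  -- per-index scalar inequality
  have scalar : ∀ i : Fin m, (if r ≤ (i : ℕ) then c i else 0) + (1/(2*lam)) * (σY i - c i) ^ 2
      ≤ (if r ≤ (i : ℕ) then σX i else 0) + (1/(2*lam)) * (σY i - σX i) ^ 2 := by
    intro i
    have ht0 : 0 ≤ σX i := sing_nonneg hmn X i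
    have hs0 := hnn i
    have hw : (0:ℝ) < 1/(2*lam) := by positivity
    have hlam' : lam ≠ 0 := ne_of_gt hlam
    by_cases h : r ≤ (i : ℕ)
    · rw [if_pos h, if_pos h, hcdef]
      dsimp only
      rw [if_neg (by omega)]
      by_cases hsl : lam ≤ σY i
      · rw [max_eq_left (by linarith)]
        have e1 : (σY i - (σY i - lam)) ^ 2 = lam ^ 2 := by ring
        rw [e1]
        have hdiff : (σX i + 1/(2*lam) * (σY i - σX i) ^ 2)
            - ((σY i - lam) + 1/(2*lam) * lam ^ 2)
            = 1/(2*lam) * (σY i - σX i - lam) ^ 2 := by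
          field_simp
          ring
        linarith [mul_nonneg (le_of_lt hw) (sq_nonneg (σY i - σX i - lam)), hdiff]
      · rw [max_eq_right (by linarith)]
        have e1 : (σY i - 0) ^ 2 = (σY i) ^ 2 := by ring
        rw [e1]
        have hdiff : (σX i + 1/(2*lam) * (σY i - σX i) ^ 2)
            - (0 + 1/(2*lam) * (σY i) ^ 2)
            = σX i * (1 - σY i / lam) + 1/(2*lam) * (σX i) ^ 2 := by
          field_simp
          ring
        have hsl' : σY i / lam < 1 := (div_lt_one hlam).mpr (lt_of_not_ge hsl)
        have h1 : 0 ≤ σX i * (1 - σY i / lam) := mul_nonneg ht0 (by linarith)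
        have h2 : 0 ≤ 1/(2*lam) * (σX i) ^ 2 := mul_nonneg (le_of_lt hw) (sq_nonneg _)
        linarith [hdiff, h1, h2]
    · rw [if_neg h, if_neg h, hcdef]
      dsimp only
      rw [if_pos (by omega)]
      have e1 : (σY i - σY i) ^ 2 = 0 := by ring
      rw [e1]
      have h2 : 0 ≤ 1/(2*lam) * (σY i - σX i) ^ 2 := mul_nonneg (le_of_lt hw) (sq_nonneg _)
      linarith
  -- final assembly
  have step1 : (∑ i : Fin m, if r ≤ (i : ℕ) then σH i else 0) + (1/(2*lam)) * frobSq (Y - Xhat)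
      ≤ ∑ i : Fin m, ((if r ≤ (i : ℕ) then c i else 0) + (1/(2*lam)) * (σY i - c i) ^ 2) := by
    rw [F1, Finset.sum_add_distrib, ← Finset.mul_sum]
    linarith [T1H]
  have step2 : ∑ i : Fin m, ((if r ≤ (i : ℕ) then c i else 0) + (1/(2*lam)) * (σY i - c i) ^ 2)
      ≤ ∑ i : Fin m, ((if r ≤ (i : ℕ) then σX i else 0) + (1/(2*lam)) * (σY i - σX i) ^ 2) :=
    Finset.sum_le_sum fun i _ => scalar i
  have step3 : ∑ i : Fin m, ((if r ≤ (i : ℕ) then σX i else 0) + (1/(2*lam)) * (σY i - σX i) ^ 2)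
      ≤ (∑ i : Fin m, if r ≤ (i : ℕ) then σX i else 0) + (1/(2*lam)) * frobSq (Y - X) := by
    rw [Finset.sum_add_distrib, ← Finset.mul_sum]
    have := mul_le_mul_of_nonneg_left F3 (le_of_lt (show (0:ℝ) < 1/(2*lam) by positivity))
    linarith
  linarith [step1, step2, step3]
end

section
/- Let σ ≥ 0 and λ > 0 be real numbers, and consider the function h(x) = [x ≠ 0] + (1/(2λ))·(x − σ)² on ℝ, where [x ≠ 0] equals 1 if x ≠ 0 and 0 if x = 0. Then: if σ > √(2λ), the point x = σ is a global minimizer of h; if σ < √(2λ), the point x = 0 is a global minimizer of h; and if σ = √(2λ), both x = 0 and x = σ are global minimizers of h. -/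
/-- The scalar hard-thresholding subproblem: for `σ ≥ 0` and `λ > 0`, consider
`h(x) = [x ≠ 0] + (1/(2λ))(x − σ)²`.  If `σ > √(2λ)` then `x = σ` is a global minimizer;
if `σ < √(2λ)` then `x = 0` is a global minimizer; if `σ = √(2λ)` both are. -/
theorem scalar_hard_threshold_minimizer (σ lam : ℝ) (hσ : 0 ≤ σ) (hlam : 0 < lam)
    (h : ℝ → ℝ)
    (hdef : h = fun x => (if x ≠ 0 then (1 : ℝ) else 0) + (1 / (2 * lam)) * (x - σ) ^ 2) :
    (Real.sqrt (2 * lam) < σ → ∀ x : ℝ, h σ ≤ h x) ∧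
    (σ < Real.sqrt (2 * lam) → ∀ x : ℝ, h 0 ≤ h x) ∧
    (σ = Real.sqrt (2 * lam) → (∀ x : ℝ, h 0 ≤ h x) ∧ (∀ x : ℝ, h σ ≤ h x)) := by
  subst hdef
  have h2lam : (0:ℝ) < 2 * lam := by linarith
  have hsq : Real.sqrt (2 * lam) ^ 2 = 2 * lam := Real.sq_sqrt (le_of_lt h2lam)
  have hsqrtpos : 0 < Real.sqrt (2 * lam) := Real.sqrt_pos.mpr h2lam
  have hinv : 0 < 1 / (2 * lam) := by positivity
  have hcan : 1 / (2 * lam) * (2 * lam) = 1 := one_div_mul_cancel h2lam.ne'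
  refine ⟨?_, ?_, ?_⟩
  · intro hgt x
    have hσpos : 0 < σ := lt_trans hsqrtpos hgt
    have hσsq : 2 * lam < σ ^ 2 := by nlinarith
    show (if σ ≠ 0 then (1:ℝ) else 0) + (1 / (2 * lam)) * (σ - σ) ^ 2 ≤
      (if x ≠ 0 then (1:ℝ) else 0) + (1 / (2 * lam)) * (x - σ) ^ 2
    rw [if_pos hσpos.ne']
    by_cases hx : x = 0
    · subst hx
      rw [if_neg (by simp)]
      nlinarith [mul_pos hinv (sub_pos.mpr hσsq)]
    · rw [if_pos hx]
      nlinarith [mul_nonneg hinv.le (sq_nonneg (x - σ))]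
  · intro hlt x
    have hσsq : σ ^ 2 ≤ 2 * lam := by nlinarith
    show (if (0:ℝ) ≠ 0 then (1:ℝ) else 0) + (1 / (2 * lam)) * ((0:ℝ) - σ) ^ 2 ≤
      (if x ≠ 0 then (1:ℝ) else 0) + (1 / (2 * lam)) * (x - σ) ^ 2
    rw [if_neg (by simp)]
    by_cases hx : x = 0
    · subst hx; simp
    · rw [if_pos hx]
      nlinarith [mul_nonneg hinv.le (sub_nonneg.mpr hσsq),
        mul_nonneg hinv.le (sq_nonneg (x - σ))]
  · intro heq
    have hσpos : 0 < σ := heq ▸ hsqrtpos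
    have hσsq : σ ^ 2 = 2 * lam := by rw [heq]; exact hsq
    have key : ∀ x : ℝ, (1:ℝ) ≤ (if x ≠ 0 then (1 : ℝ) else 0) + (1 / (2 * lam)) * (x - σ) ^ 2 := by
      intro x
      by_cases hx : x = 0
      · subst hx
        rw [if_neg (by simp)]
        nlinarith
      · rw [if_pos hx]
        nlinarith [mul_nonneg hinv.le (sq_nonneg (x - σ))]
    constructor
    · intro x
      show (if (0:ℝ) ≠ 0 then (1:ℝ) else 0) + (1 / (2 * lam)) * ((0:ℝ) - σ) ^ 2 ≤
        (if x ≠ 0 then (1:ℝ) else 0) + (1 / (2 * lam)) * (x - σ) ^ 2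
      rw [if_neg (by simp)]
      have : (0:ℝ) + 1 / (2 * lam) * ((0:ℝ) - σ) ^ 2 = 1 := by
        field_simp; nlinarith
      rw [this]; exact key x
    · intro x
      show (if σ ≠ 0 then (1:ℝ) else 0) + (1 / (2 * lam)) * (σ - σ) ^ 2 ≤
        (if x ≠ 0 then (1:ℝ) else 0) + (1 / (2 * lam)) * (x - σ) ^ 2
      rw [if_pos hσpos.ne']
      have : (1:ℝ) + 1 / (2 * lam) * (σ - σ) ^ 2 = 1 := by ring
      rw [this]; exact key x
end
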